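/- arXiv:2412.00092 — 5 statements merged into one kernel-verified Lean document; each statement's English description precedes it below -/
import Mathlib

section
/- Let K be a field, let R = K[x, y, z, w] be the polynomial ring in four variables over K, and let I = (xz, xw, yz, yw). Then for every natural number i, the Ext group Ext^i_R(R/I, R) is nonzero if and only if i ∈ {2, 3}. Equivalently, the deficiency modules K^j(R/I), whose underlying modules are Ext^{4−j}_R(R/I, R), are nonzero exactly for j ∈ {1, 2}. -/
open MvPolynomial CategoryTheory

noncomputable section
namespace ExtEx
variable {K : Type*} [Field K]
local notation "R" => MvPolynomial (Fin 4) K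

def kill (k : Fin 4) : R →ₐ[K] R := aeval (Function.update X k 0)
lemma kill_X_self (k : Fin 4) : kill (K := K) k (X k) = 0 := by simp [kill, aeval_X]
lemma kill_X_ne (k j : Fin 4) (h : j ≠ k) : kill (K := K) k (X j) = X j := by
  simp [kill, aeval_X, Function.update_of_ne h]
lemma X_dvd_sub_kill (k : Fin 4) (q : R) : ∃ c, q - kill k q = X k * c := by
  induction q using MvPolynomial.induction_on with
  | C a => exact ⟨0, by simp [kill]⟩
  | add p q hp hq =>
    rcases hp with ⟨c, hc⟩; rcases hq with ⟨d, hd⟩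
    exact ⟨c + d, by rw [map_add]; linear_combination hc + hd⟩
  | mul_X p j hp =>
    rcases hp with ⟨c, hc⟩
    by_cases hj : j = k
    · subst hj
      exact ⟨p, by rw [map_mul, kill_X_self, mul_zero, sub_zero]; ring⟩
    · exact ⟨c * X j, by rw [map_mul, kill_X_ne k j hj]; linear_combination X j * hc⟩
lemma xdvd {i j : Fin 4} (h : i ≠ j) {a b : R} (hab : X i * a = X j * b) :
    ∃ c, a = X j * c ∧ b = X i * c := by
  have h1 : kill j (X i * a) = kill j (X j * b) := by rw [hab]
  rw [map_mul, map_mul, kill_X_self, zero_mul, kill_X_ne j i h] at h1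
  have h2 : kill j a = 0 := by
    rcases mul_eq_zero.1 h1 with h' | h'
    · exact absurd h' (X_ne_zero i)
    · exact h'
  rcases X_dvd_sub_kill j a with ⟨c, hc⟩
  rw [h2, sub_zero] at hc
  refine ⟨c, hc, ?_⟩
  rw [hc] at hab
  have h3 : X j * (X i * c) = X j * b := by linear_combination hab
  exact (mul_left_cancel₀ (X_ne_zero j) h3).symm
lemma three_term {i j k : Fin 4} (hij : i ≠ j) (hik : i ≠ k) (hjk : j ≠ k)
    {a b u : R} (h : X i * a + X j * b = X k * u) :
    ∃ p a₂ b₂, a = X j * p + X k * a₂ ∧ b = -(X i * p) + X k * b₂ ∧ u = X i * a₂ + X j * b₂ := by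
  have h1 : kill k (X i) * kill k a + kill k (X j) * kill k b = 0 := by
    have := congrArg (kill (K := K) k) h
    rw [map_add, map_mul, map_mul, map_mul, kill_X_self, zero_mul] at this
    exact this
  rw [kill_X_ne k i hik, kill_X_ne k j hjk] at h1
  have h2 : X i * kill k a = X j * (- kill k b) := by linear_combination h1
  rcases xdvd hij h2 with ⟨p, hp1, hp2⟩
  rcases X_dvd_sub_kill k a with ⟨a₂, ha₂⟩
  rcases X_dvd_sub_kill k b with ⟨b₂, hb₂⟩
  have ha : a = X j * p + X k * a₂ := by rw [← hp1]; linear_combination ha₂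
  have hb : b = -(X i * p) + X k * b₂ := by
    have h5 : kill k b = -(X i * p) := by linear_combination -hp2
    rw [← h5]; linear_combination hb₂
  refine ⟨p, a₂, b₂, ha, hb, ?_⟩
  have h4 : X k * u = X k * (X i * a₂ + X j * b₂) := by rw [← h, ha, hb]; ring
  exact mul_left_cancel₀ (X_ne_zero k) h4

variable (K) in
def gens : Fin 4 → R := ![X 0 * X 2, X 0 * X 3, X 1 * X 2, X 1 * X 3]
variable (K) in
def d1 : (Fin 4 → R) →ₗ[R] R := Fintype.linearCombination R (gens K)
variable (K) in
def A : Matrix (Fin 4) (Fin 4) R :=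
  !![X 3, X 1, 0, 0; -X 2, 0, X 1, 0; 0, -X 0, 0, X 3; 0, 0, -X 0, -X 2]
variable (K) in
def d2 : (Fin 4 → R) →ₗ[R] (Fin 4 → R) := Matrix.toLin' (A K)
variable (K) in
def d3 : R →ₗ[R] (Fin 4 → R) := LinearMap.toSpanSingleton R _ ![X 1, -X 3, X 2, -X 0]

lemma d1_apply (v : Fin 4 → R) :
    d1 K v = v 0 * (X 0 * X 2) + v 1 * (X 0 * X 3) + v 2 * (X 1 * X 2) + v 3 * (X 1 * X 3) := by
  simp [d1, Fintype.linearCombination_apply, gens, Fin.sum_univ_four, smul_eq_mul]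
lemma d2_apply (v : Fin 4 → R) :
    d2 K v = ![X 3 * v 0 + X 1 * v 1, -(X 2 * v 0) + X 1 * v 2,
      -(X 0 * v 1) + X 3 * v 3, -(X 0 * v 2) - X 2 * v 3] := by
  funext i
  fin_cases i <;>
    simp [d2, A, Matrix.toLin'_apply, Matrix.mulVec, dotProduct, Fin.sum_univ_four] <;> ring
lemma d3_apply (r : R) : d3 K r = ![r * X 1, -(r * X 3), r * X 2, -(r * X 0)] := by
  funext i
  fin_cases i <;> simp [d3, LinearMap.toSpanSingleton_apply, smul_eq_mul] <;> ring

/-- surjectivity of d2 onto ker d1 -/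
lemma exact21 (v : Fin 4 → R) (hv : d1 K v = 0) : ∃ u, d2 K u = v := by
  rw [d1_apply] at hv
  have h0 : X 0 * (X 2 * v 0 + X 3 * v 1) = X 1 * (-(X 2 * v 2 + X 3 * v 3)) := by
    linear_combination hv
  rcases xdvd (by decide) h0 with ⟨u, hu1, hu2⟩
  rcases three_term (i := 2) (j := 3) (k := 1) (by decide) (by decide) (by decide) hu1 with
    ⟨p, a₂, b₂, ha, hb, hu⟩
  have hu2' : X 2 * v 2 + X 3 * v 3 = X 0 * (-u) := by linear_combination -hu2
  rcases three_term (i := 2) (j := 3) (k := 0) (by decide) (by decide) (by decide) hu2' with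
    ⟨q, c₂, d₂, hc, hd, hu'⟩
  have hm : X 2 * (a₂ + c₂) = X 3 * (-(b₂ + d₂)) := by linear_combination -hu - hu'
  rcases xdvd (by decide) hm with ⟨m, hm1, hm2⟩
  refine ⟨![p, a₂, b₂, q + X 0 * m], ?_⟩
  rw [d2_apply]
  funext i
  fin_cases i <;> simp
  · linear_combination -ha
  · linear_combination -hb
  · linear_combination -hc - X 0 * hm1
  · linear_combination -hd + X 0 * hm2

lemma exact32 (v : Fin 4 → R) (hv : d2 K v = 0) : ∃ u, d3 K u = v := by
  rw [d2_apply] at hv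
  have h0 := congrFun hv 0
  have h1 := congrFun hv 1
  have h2 := congrFun hv 2
  simp at h0 h1 h2
  have e0 : X 3 * v 0 = X 1 * (-v 1) := by linear_combination h0
  rcases xdvd (by decide) e0 with ⟨r, hr0, hr1⟩
  have e2 : X 1 * v 2 = X 1 * (X 2 * r) := by linear_combination h1 + X 2 * hr0
  have hv2 : v 2 = X 2 * r := mul_left_cancel₀ (X_ne_zero 1) e2
  have e3 : X 3 * v 3 = X 3 * (-(X 0 * r)) := by linear_combination h2 - X 0 * hr1
  have hv3 : v 3 = -(X 0 * r) := mul_left_cancel₀ (X_ne_zero 3) e3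
  refine ⟨r, ?_⟩
  rw [d3_apply]
  funext i
  fin_cases i <;> simp
  · linear_combination -hr0
  · linear_combination hr1
  · linear_combination -hv2
  · linear_combination -hv3

lemma exact43 (v : R) (hv : d3 K v = 0) : v = 0 := by
  rw [d3_apply] at hv
  have h0 := congrFun hv 0
  simp at h0
  simpa using h0


variable (K) in
def XX : ℕ → ModuleCat R
  | 0 => ModuleCat.of R R
  | 1 => ModuleCat.of R (Fin 4 → R)
  | 2 => ModuleCat.of R (Fin 4 → R)
  | 3 => ModuleCat.of R R
  | _+4 => ModuleCat.of R PUnit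

variable (K) in
def dd : ∀ n, XX K (n+1) ⟶ XX K n
  | 0 => ModuleCat.ofHom (d1 K)
  | 1 => ModuleCat.ofHom (d2 K)
  | 2 => ModuleCat.ofHom (d3 K)
  | _+3 => 0

lemma sq : ∀ n, dd K (n+1) ≫ dd K n = 0 := by
  intro n
  match n with
  | 0 =>
    ext v
    show d1 K (d2 K v) = 0
    erw [d2_apply, d1_apply]
    simp only [Matrix.cons_val_zero, Matrix.cons_val_one, Matrix.head_cons,
      Matrix.cons_val_two, Matrix.tail_cons, Matrix.cons_val_three]
    ring
  | 1 =>
    apply ModuleCat.hom_ext; apply LinearMap.ext; intro (r : R)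
    show d2 K (d3 K r) = 0
    erw [d3_apply, d2_apply]
    funext i
    fin_cases i <;> simp <;> ring
  | 2 => exact Limits.zero_comp
  | (n+3) => exact Limits.zero_comp

variable (K) in
def cx : ChainComplex (ModuleCat R) ℕ := ChainComplex.of (XX K) (dd K) (sq (K := K))

variable (K) in
lemma projXX : ∀ n, Projective ((cx K).X n) := by
  intro n
  show Projective (XX K n)
  match n with
  | 0 => exact ModuleCat.projective_of_free (Module.Basis.singleton PUnit.{1} R)
  | 1 => exact ModuleCat.projective_of_free (Pi.basisFun R (Fin 4))
  | 2 => exact ModuleCat.projective_of_free (Pi.basisFun R (Fin 4))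
  | 3 => exact ModuleCat.projective_of_free (Module.Basis.singleton PUnit.{1} R)
  | (n+4) =>
    haveI : Subsingleton (XX K (n+4)) := ⟨fun _ _ => rfl⟩
    exact ModuleCat.projective_of_free ((Module.Basis.empty _ : Module.Basis PEmpty.{1} R (XX K (n+4))))

lemma cx_d10 : (cx K).d 1 0 = (ModuleCat.ofHom (d1 K) :
    ModuleCat.of R (Fin 4 → R) ⟶ ModuleCat.of R R) := ChainComplex.of_d (XX K) (dd K) 0
lemma cx_d21 : (cx K).d 2 1 = (ModuleCat.ofHom (d2 K) :
    ModuleCat.of R (Fin 4 → R) ⟶ ModuleCat.of R (Fin 4 → R)) := ChainComplex.of_d (XX K) (dd K) 1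
lemma cx_d32 : (cx K).d 3 2 = (ModuleCat.ofHom (d3 K) :
    ModuleCat.of R R ⟶ ModuleCat.of R (Fin 4 → R)) := ChainComplex.of_d (XX K) (dd K) 2
lemma cx_d43 : (cx K).d 4 3 = 0 := ChainComplex.of_d (XX K) (dd K) 3

lemma cx_exactAt (n : ℕ) : (cx K).ExactAt (n+1) := by
  rw [HomologicalComplex.exactAt_iff' _ (n+2) (n+1) n (by simp) (by simp)]
  rw [ShortComplex.moduleCat_exact_iff]
  match n with
  | 0 =>
    intro v hv
    have hv' : d1 K v = 0 := by rw [← ModuleCat.hom_ofHom (d1 K), ← cx_d10]; exact hv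
    rcases exact21 v hv' with ⟨u, hu⟩
    exact ⟨u, by rw [show ((cx K).sc' 2 1 0).f = (cx K).d 2 1 from rfl, cx_d21]; exact hu⟩
  | 1 =>
    intro v hv
    have hv' : d2 K v = 0 := by rw [← ModuleCat.hom_ofHom (d2 K), ← cx_d21]; exact hv
    rcases exact32 v hv' with ⟨u, hu⟩
    exact ⟨u, by rw [show ((cx K).sc' 3 2 1).f = (cx K).d 3 2 from rfl, cx_d32]; exact hu⟩
  | 2 =>
    intro v hv
    have hv' : d3 K v = 0 := by rw [← ModuleCat.hom_ofHom (d3 K), ← cx_d32]; exact hv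
    have : v = 0 := exact43 v hv'
    refine ⟨0, ?_⟩
    rw [show ((cx K).sc' 4 3 2).f = (cx K).d 4 3 from rfl, cx_d43, this]
    rfl
  | (m+3) =>
    intro v hv
    exact ⟨0, Subsingleton.elim (α := PUnit.{_+1}) _ _⟩

variable (K) in
def Ispan : Ideal R := Ideal.span {(X 0 * X 2 : R), X 0 * X 3, X 1 * X 2, X 1 * X 3}

variable (K) in
def M : ModuleCat R := ModuleCat.of R (R ⧸ Ispan K)

variable (K) in
def pi0 : (cx K).X 0 ⟶ M K := ModuleCat.ofHom (Ispan K).mkQ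

lemma gens_mem (j : Fin 4) : gens K j ∈ Ispan K := by
  apply Ideal.subset_span
  fin_cases j <;> simp [gens]

lemma d10_pi0 : (cx K).d 1 0 ≫ pi0 K = 0 := by
  rw [cx_d10]
  ext v
  show (Ispan K).mkQ (d1 K v) = 0
  rw [Submodule.mkQ_apply, Submodule.Quotient.mk_eq_zero]
  erw [d1_apply]
  have h0 := gens_mem (K := K) 0
  have h1 := gens_mem (K := K) 1
  have h2 := gens_mem (K := K) 2
  have h3 := gens_mem (K := K) 3
  simp only [gens, Matrix.cons_val_zero, Matrix.cons_val_one, Matrix.head_cons,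
    Matrix.cons_val_two, Matrix.tail_cons, Matrix.cons_val_three] at h0 h1 h2 h3
  exact Submodule.add_mem _ (Submodule.add_mem _ (Submodule.add_mem _
    (Ideal.mul_mem_left _ _ h0) (Ideal.mul_mem_left _ _ h1))
    (Ideal.mul_mem_left _ _ h2)) (Ideal.mul_mem_left _ _ h3)

lemma pi0_surjective : Function.Surjective (pi0 K) := Submodule.mkQ_surjective _

lemma exact10 (p : R) (hp : pi0 K p = 0) : ∃ v, d1 K v = p := by
  have hmem : p ∈ Ispan K := by
    erw [show pi0 K p = (Ispan K).mkQ p from rfl, Submodule.mkQ_apply,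
      Submodule.Quotient.mk_eq_zero] at hp; exact hp
  rw [Ispan] at hmem
  rcases Ideal.mem_span_insert.1 hmem with ⟨r0, z0, hz0, rfl⟩
  rcases Ideal.mem_span_insert.1 hz0 with ⟨r1, z1, hz1, rfl⟩
  rcases Ideal.mem_span_insert.1 hz1 with ⟨r2, z2, hz2, rfl⟩
  rcases Ideal.mem_span_singleton'.1 hz2 with ⟨r3, rfl⟩
  refine ⟨![r0, r1, r2, r3], ?_⟩
  rw [d1_apply]
  simp only [Matrix.cons_val_zero, Matrix.cons_val_one, Matrix.head_cons,
    Matrix.cons_val_two, Matrix.tail_cons, Matrix.cons_val_three]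
  ring

variable (K) in
def S2 : ShortComplex (ModuleCat R) := ShortComplex.mk ((cx K).d 1 0) (pi0 K) d10_pi0

lemma S2_exact : (S2 K).Exact := by
  rw [ShortComplex.moduleCat_exact_iff]
  intro p hp
  rcases exact10 p hp with ⟨v, hv⟩
  exact ⟨v, by rw [show (S2 K).f = (cx K).d 1 0 from rfl, cx_d10]; exact hv⟩

lemma S2_epi : Epi (S2 K).g := by
  rw [ModuleCat.epi_iff_surjective]
  exact pi0_surjective

variable (K) in
def projRes : ProjectiveResolution (M K) where
  complex := cx K
  projective := projXX K
  π := (ChainComplex.toSingle₀Equiv _ _).symm ⟨pi0 K, d10_pi0⟩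
  quasiIso := ⟨fun n => by
    cases n with
    | zero =>
      rw [ChainComplex.quasiIsoAt₀_iff, ShortComplex.quasiIso_iff_of_zeros']
      · refine (ShortComplex.exact_and_epi_g_iff_of_iso ?_).2 ⟨S2_exact, S2_epi⟩
        exact ShortComplex.isoMk (Iso.refl _) (Iso.refl _) (Iso.refl _)
          (by exact (Category.id_comp _).trans (Category.comp_id _).symm)
          (by exact (Category.id_comp _).trans (Category.comp_id _).symm)
      all_goals rfl
    | succ n =>
      rw [quasiIsoAt_iff_exactAt']
      · exact cx_exactAt n
      · apply ChainComplex.exactAt_succ_single_obj⟩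

section Cochain

variable (K) in
def DD : CochainComplex (ModuleCat R) ℕ :=
  (cx K).linearYonedaObj R (ModuleCat.of R R)

lemma vec_decomp (v : Fin 4 → R) :
    v = v 0 • (Pi.single 0 1 : Fin 4 → R) + v 1 • (Pi.single 1 1 : Fin 4 → R)
      + v 2 • (Pi.single 2 1 : Fin 4 → R) + v 3 • (Pi.single 3 1 : Fin 4 → R) := by
  funext i
  fin_cases i <;> simp [Pi.single_apply]

lemma lm_pi_apply (φ : (Fin 4 → R) →ₗ[R] R) (v : Fin 4 → R) :
    φ v = v 0 * φ (Pi.single 0 1) + v 1 * φ (Pi.single 1 1)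
      + v 2 * φ (Pi.single 2 1) + v 3 * φ (Pi.single 3 1) := by
  conv_lhs => rw [vec_decomp v]
  rw [map_add, map_add, map_add, map_smul, map_smul, map_smul, map_smul]
  simp [smul_eq_mul]

lemma DD_exact0 : (DD K).ExactAt 0 := by
  rw [HomologicalComplex.exactAt_iff' _ 0 0 1 (by simp) (by simp),
    ShortComplex.moduleCat_exact_iff]
  show ∀ φ : ModuleCat.of R R ⟶ ModuleCat.of R R, (DD K).d 0 1 φ = 0 →
    ∃ ψ : ModuleCat.of R R ⟶ ModuleCat.of R R, (DD K).d 0 0 ψ = φ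
  intro φ hφ
  obtain ⟨φ, rfl⟩ : ∃ φ' : R →ₗ[R] R, φ = ModuleCat.ofHom φ' := ⟨φ.hom, rfl⟩
  have h' : φ.comp (d1 K) = 0 := congrArg ModuleCat.Hom.hom hφ
  have h1 : φ (d1 K (Pi.single 0 1)) = 0 := by
    have := LinearMap.congr_fun h' (Pi.single 0 1)
    simpa using this
  have h3 : d1 K (Pi.single 0 1) = X 0 * X 2 := by
    rw [d1_apply]
    simp [Pi.single_apply]
  rw [h3] at h1
  have h1' : (X 0 * X 2 : R) * φ 1 = 0 := by
    rw [← h1]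
    have : (X 0 * X 2 : R) = (X 0 * X 2 : R) • (1 : R) := by
      rw [smul_eq_mul, mul_one]
    conv_rhs => rw [this, map_smul, smul_eq_mul]
  have h4 : φ (1 : R) = 0 := by
    rcases mul_eq_zero.1 h1' with h'' | h''
    · exact absurd h'' (mul_ne_zero (X_ne_zero 0) (X_ne_zero 2))
    · exact h''
  have hz : φ = 0 := by
    apply LinearMap.ext
    intro r
    have : φ r = r * φ 1 := by
      have : (r : R) = r • (1 : R) := by rw [smul_eq_mul, mul_one]
      conv_lhs => rw [this, map_smul, smul_eq_mul]
    rw [this, h4, mul_zero]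
    rfl
  refine ⟨0, ?_⟩
  rw [hz]
  exact map_zero _

lemma DD_exact1 : (DD K).ExactAt 1 := by
  rw [HomologicalComplex.exactAt_iff' _ 0 1 2 (by simp) (by simp),
    ShortComplex.moduleCat_exact_iff]
  show ∀ φ : ModuleCat.of R (Fin 4 → R) ⟶ ModuleCat.of R R, (DD K).d 1 2 φ = 0 →
    ∃ ψ : ModuleCat.of R R ⟶ ModuleCat.of R R, (DD K).d 0 1 ψ = φ
  intro φ hφ
  obtain ⟨φ, rfl⟩ : ∃ φ' : (Fin 4 → R) →ₗ[R] R, φ = ModuleCat.ofHom φ' := ⟨φ.hom, rfl⟩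
  have h' : φ.comp (d2 K) = 0 := congrArg ModuleCat.Hom.hom hφ
  have key : ∀ j : Fin 4, φ (d2 K (Pi.single j 1)) = 0 := by
    intro j
    have := LinearMap.congr_fun h' (Pi.single j 1)
    simpa using this
  have e0 := key 0
  have e1 := key 1
  have e2 := key 2
  rw [d2_apply, lm_pi_apply] at e0 e1 e2
  simp [Pi.single_apply] at e0 e1 e2
  have f0 : X 3 * φ (Pi.single 0 1) = X 2 * φ (Pi.single 1 1) := by linear_combination e0
  rcases xdvd (show (3 : Fin 4) ≠ 2 by decide) f0 with ⟨c, hc0, hc1⟩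
  have f1 : X 1 * (X 2 * c) = X 0 * φ (Pi.single 2 1) := by
    linear_combination e1 - X 1 * hc0
  rcases xdvd (show (1 : Fin 4) ≠ 0 by decide) f1 with ⟨s, hs0, hs1⟩
  rcases xdvd (show (2 : Fin 4) ≠ 0 by decide) hs0 with ⟨t, ht0, ht1⟩
  have hP0 : φ (Pi.single 0 1) = X 0 * X 2 * t := by rw [hc0, ht0]; ring
  have hP1 : φ (Pi.single 1 1) = X 0 * X 3 * t := by rw [hc1, ht0]; ring
  have hP2 : φ (Pi.single 2 1) = X 1 * X 2 * t := by rw [hs1, ht1]; ring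
  have hP3 : φ (Pi.single 3 1) = X 1 * X 3 * t := by
    have f3 : X 0 * φ (Pi.single 3 1) = X 0 * (X 1 * X 3 * t) := by
      linear_combination -e2 + X 1 * hP1
    exact mul_left_cancel₀ (X_ne_zero 0) f3
  refine ⟨ModuleCat.ofHom (LinearMap.toSpanSingleton R R t), ?_⟩
  apply ModuleCat.hom_ext
  show (LinearMap.toSpanSingleton R R t).comp (d1 K) = φ
  apply LinearMap.ext
  intro v
  show d1 K v • t = φ v
  rw [lm_pi_apply φ v, d1_apply, hP0, hP1, hP2, hP3, smul_eq_mul]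
  ring

lemma DD_nonexact2 : ¬ (DD K).ExactAt 2 := by
  rw [HomologicalComplex.exactAt_iff' _ 1 2 3 (by simp) (by simp),
    ShortComplex.moduleCat_exact_iff]
  intro h
  replace h : ∀ φ : ModuleCat.of R (Fin 4 → R) ⟶ ModuleCat.of R R, (DD K).d 2 3 φ = 0 →
    ∃ ψ : ModuleCat.of R (Fin 4 → R) ⟶ ModuleCat.of R R, (DD K).d 1 2 ψ = φ := h
  set φ : (Fin 4 → R) →ₗ[R] R :=
    (X 0 : R) • LinearMap.proj 0 + (X 1 : R) • LinearMap.proj 3 with hφdef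
  have happ : ∀ v : Fin 4 → R, φ v = X 0 * v 0 + X 1 * v 3 := by
    intro v
    simp [hφdef, smul_eq_mul]
  have hcoc : (DD K).d 2 3 (ModuleCat.ofHom φ) = 0 := by
    apply ModuleCat.hom_ext
    show φ.comp (d3 K) = 0
    apply LinearMap.ext
    intro r
    show φ (d3 K r) = 0
    rw [d3_apply, happ]
    simp only [Matrix.cons_val_zero, Matrix.cons_val_three, Matrix.cons_val_one,
      Matrix.head_cons, Matrix.tail_cons, Matrix.cons_val_two]
    ring
  rcases h (ModuleCat.ofHom φ) hcoc with ⟨ψ, hψ⟩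
  obtain ⟨ψ, rfl⟩ : ∃ ψ' : (Fin 4 → R) →ₗ[R] R, ψ = ModuleCat.ofHom ψ' := ⟨ψ.hom, rfl⟩
  have hψ' : ψ.comp (d2 K) = φ := congrArg ModuleCat.Hom.hom hψ
  have h1 : ψ (d2 K (Pi.single 0 1)) = φ (Pi.single 0 1) := by
    have := LinearMap.congr_fun hψ' (Pi.single 0 1)
    simpa using this
  rw [happ, d2_apply, lm_pi_apply] at h1
  simp [Pi.single_apply] at h1
  have hcontra := congrArg (eval (Pi.single 0 (1 : K))) h1
  simp [map_mul, map_neg, eval_X, Pi.single_apply] at hcontra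

lemma DD_nonexact3 : ¬ (DD K).ExactAt 3 := by
  rw [HomologicalComplex.exactAt_iff' _ 2 3 4 (by simp) (by simp),
    ShortComplex.moduleCat_exact_iff]
  intro h
  replace h : ∀ φ : ModuleCat.of R R ⟶ ModuleCat.of R R, (DD K).d 3 4 φ = 0 →
    ∃ ψ : ModuleCat.of R (Fin 4 → R) ⟶ ModuleCat.of R R, (DD K).d 2 3 ψ = φ := h
  have hzero : (DD K).d 3 4 (ModuleCat.ofHom (LinearMap.id : R →ₗ[R] R)) = 0 := by
    show (cx K).d 4 3 ≫ ModuleCat.ofHom (LinearMap.id : R →ₗ[R] R) = 0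
    rw [cx_d43]; exact Limits.zero_comp
  rcases h (ModuleCat.ofHom LinearMap.id) hzero with ⟨ψ, hψ⟩
  obtain ⟨ψ, rfl⟩ : ∃ ψ' : (Fin 4 → R) →ₗ[R] R, ψ = ModuleCat.ofHom ψ' := ⟨ψ.hom, rfl⟩
  have hψ' : ψ.comp (d3 K) = LinearMap.id := congrArg ModuleCat.Hom.hom hψ
  have h1 : ψ (d3 K (1 : R)) = (1 : R) := by
    have := LinearMap.congr_fun hψ' 1
    simpa using this
  rw [d3_apply, lm_pi_apply] at h1
  simp only [Matrix.cons_val_zero, Matrix.cons_val_one, Matrix.head_cons,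
    Matrix.cons_val_two, Matrix.tail_cons, Matrix.cons_val_three] at h1
  have hcontra := congrArg (fun q : R => constantCoeff q) h1
  simp only [map_add, map_mul, constantCoeff_X, map_one] at hcontra
  norm_num at hcontra

lemma DD_exact_ge4 (m : ℕ) : (DD K).ExactAt (m+4) := by
  rw [HomologicalComplex.exactAt_iff]
  refine ShortComplex.exact_of_isZero_X₂ _ ?_
  haveI hsub : Subsingleton ((DD K).X (m+4)) := by
    have : Subsingleton (ModuleCat.of R PUnit ⟶ ModuleCat.of R R) := by
      refine ⟨fun f g => ?_⟩
      ext x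
      rw [Subsingleton.elim (α := PUnit) x 0, map_zero, map_zero]
    exact this
  exact ModuleCat.isZero_of_subsingleton ((DD K).X (m+4))

end Cochain

lemma nontrivial_iff_not_isZero (N : ModuleCat R) : Nontrivial N ↔ ¬ Limits.IsZero N := by
  constructor
  · intro hnt hz
    rcases hnt with ⟨a, b, hab⟩
    apply hab
    have h1 : (𝟙 N : N ⟶ N) = 0 := hz.eq_of_src _ _
    have key : ∀ x : N, x = 0 := by
      intro x
      have h2 : (𝟙 N : N ⟶ N) x = (0 : N ⟶ N) x := by rw [h1]
      simpa using h2
    rw [key a, key b]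
  · intro h
    rcases subsingleton_or_nontrivial N with hs | hn
    · exact absurd (ModuleCat.isZero_of_subsingleton N) h
    · exact hn

lemma main (i : ℕ) :
    Nontrivial (((Ext R (ModuleCat R) i).obj (Opposite.op (M K))).obj (ModuleCat.of R R)) ↔
      i = 2 ∨ i = 3 := by
  rw [nontrivial_iff_not_isZero]
  have e : (((Ext R (ModuleCat R) i).obj (Opposite.op (M K))).obj (ModuleCat.of R R))
      ≅ (DD K).homology i := (projRes K).isoExt i (ModuleCat.of R R)
  have hzz : Limits.IsZero
      (((Ext R (ModuleCat R) i).obj (Opposite.op (M K))).obj (ModuleCat.of R R))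
      ↔ Limits.IsZero ((DD K).homology i) :=
    ⟨fun h => h.of_iso e.symm, fun h => h.of_iso e⟩
  rw [hzz, ← HomologicalComplex.exactAt_iff_isZero_homology]
  constructor
  · intro h
    match i with
    | 0 => exact absurd DD_exact0 h
    | 1 => exact absurd DD_exact1 h
    | 2 => exact Or.inl rfl
    | 3 => exact Or.inr rfl
    | (m+4) => exact absurd (DD_exact_ge4 m) h
  · rintro (rfl | rfl)
    · exact DD_nonexact2
    · exact DD_nonexact3

end ExtEx

/-- Let `R = K[x, y, z, w]` (with `x = X 0`, `y = X 1`, `z = X 2`, `w = X 3`) and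
`I = (xz, xw, yz, yw)`. Then `Ext^i_R(R/I, R) ≠ 0` if and only if `i ∈ {2, 3}`;
equivalently, the deficiency modules `K^j(R/I) = Ext^{4-j}_R(R/I, R(-4))` are nonzero
exactly for `j ∈ {1, 2}`. -/
theorem ext_nonzero_iff_monomial_example {K : Type*} [Field K] (i : ℕ) :
    Nontrivial
      (((Ext (MvPolynomial (Fin 4) K) (ModuleCat (MvPolynomial (Fin 4) K)) i).obj
          (Opposite.op (ModuleCat.of (MvPolynomial (Fin 4) K)
            (MvPolynomial (Fin 4) K ⧸ Ideal.span
              {(X 0 * X 2 : MvPolynomial (Fin 4) K), X 0 * X 3, X 1 * X 2, X 1 * X 3})))).obj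
        (ModuleCat.of (MvPolynomial (Fin 4) K) (MvPolynomial (Fin 4) K))) ↔
      i = 2 ∨ i = 3 :=
  ExtEx.main i
end
end

section
/- Let A = ℚ[x₁, …, x₆] be the polynomial ring in six variables over ℚ and let I = (x₁x₂ − x₄², x₂x₃ − x₅², x₄x₆, x₅x₆). Then I = P₁ ∩ P₂ ∩ P₃, where P₁ = (x₂x₃ − x₅², x₁x₂ − x₄², x₆), P₂ = (x₁, x₃, x₄, x₅), and P₃ = (x₂, x₄, x₅); moreover, each of P₁, P₂, P₃ is a prime ideal of A. -/
open MvPolynomial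

namespace ToricFaceAux

noncomputable section

abbrev A : Type := MvPolynomial (Fin 6) ℚ

def φ₁ : A →ₐ[ℚ] MvPolynomial (Fin 3) ℚ :=
  aeval ![X 0 ^ 2, X 1 ^ 2, X 2 ^ 2, X 0 * X 1, X 1 * X 2, 0]
def φ₂ : A →ₐ[ℚ] MvPolynomial (Fin 2) ℚ :=
  aeval ![0, X 0, 0, 0, 0, X 1]
def φ₃ : A →ₐ[ℚ] MvPolynomial (Fin 3) ℚ :=
  aeval ![X 0, 0, X 1, 0, 0, X 2]

@[simp] lemma phi1_X0 : φ₁ (X 0) = X 0 ^ 2 := by rw [φ₁, aeval_X]; rfl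
@[simp] lemma phi1_X1 : φ₁ (X 1) = X 1 ^ 2 := by rw [φ₁, aeval_X]; rfl
@[simp] lemma phi1_X2 : φ₁ (X 2) = X 2 ^ 2 := by rw [φ₁, aeval_X]; rfl
@[simp] lemma phi1_X3 : φ₁ (X 3) = X 0 * X 1 := by rw [φ₁, aeval_X]; rfl
@[simp] lemma phi1_X4 : φ₁ (X 4) = X 1 * X 2 := by rw [φ₁, aeval_X]; rfl
@[simp] lemma phi1_X5 : φ₁ (X 5) = 0 := by rw [φ₁, aeval_X]; rfl
@[simp] lemma phi2_X0 : φ₂ (X 0) = 0 := by rw [φ₂, aeval_X]; rfl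
@[simp] lemma phi2_X1 : φ₂ (X 1) = X 0 := by rw [φ₂, aeval_X]; rfl
@[simp] lemma phi2_X2 : φ₂ (X 2) = 0 := by rw [φ₂, aeval_X]; rfl
@[simp] lemma phi2_X3 : φ₂ (X 3) = 0 := by rw [φ₂, aeval_X]; rfl
@[simp] lemma phi2_X4 : φ₂ (X 4) = 0 := by rw [φ₂, aeval_X]; rfl
@[simp] lemma phi2_X5 : φ₂ (X 5) = X 1 := by rw [φ₂, aeval_X]; rfl
@[simp] lemma phi3_X0 : φ₃ (X 0) = X 0 := by rw [φ₃, aeval_X]; rfl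
@[simp] lemma phi3_X1 : φ₃ (X 1) = 0 := by rw [φ₃, aeval_X]; rfl
@[simp] lemma phi3_X2 : φ₃ (X 2) = X 1 := by rw [φ₃, aeval_X]; rfl
@[simp] lemma phi3_X3 : φ₃ (X 3) = 0 := by rw [φ₃, aeval_X]; rfl
@[simp] lemma phi3_X4 : φ₃ (X 4) = 0 := by rw [φ₃, aeval_X]; rfl
@[simp] lemma phi3_X5 : φ₃ (X 5) = X 2 := by rw [φ₃, aeval_X]; rfl

lemma aeval_monomial6 {τ : Type} (v : Fin 6 → MvPolynomial τ ℚ) (m : Fin 6 →₀ ℕ) (c : ℚ) :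
    aeval v (monomial m c) =
      C c * (v 0 ^ m 0 * v 1 ^ m 1 * v 2 ^ m 2 * v 3 ^ m 3 * v 4 ^ m 4 * v 5 ^ m 5) := by
  rw [aeval_monomial, Finsupp.prod_fintype _ _ (fun i => pow_zero _), Fin.prod_univ_six,
    algebraMap_eq]

lemma monomial3 (p q r : ℕ) (c : ℚ) :
    (monomial (Finsupp.equivFunOnFinite.symm ![p, q, r]) c : MvPolynomial (Fin 3) ℚ) =
      C c * (X 0 ^ p * X 1 ^ q * X 2 ^ r) := by
  rw [monomial_eq, Finsupp.prod_fintype _ _ (fun i => pow_zero _), Fin.prod_univ_three]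
  simp

lemma monomial2 (p q : ℕ) (c : ℚ) :
    (monomial (Finsupp.equivFunOnFinite.symm ![p, q]) c : MvPolynomial (Fin 2) ℚ) =
      C c * (X 0 ^ p * X 1 ^ q) := by
  rw [monomial_eq, Finsupp.prod_fintype _ _ (fun i => pow_zero _), Fin.prod_univ_two]
  simp

def ι₁ (m : Fin 6 →₀ ℕ) : Fin 3 →₀ ℕ :=
  Finsupp.equivFunOnFinite.symm ![2 * m 0 + m 3, 2 * m 1 + m 3 + m 4, 2 * m 2 + m 4]
def ι₂ (m : Fin 6 →₀ ℕ) : Fin 2 →₀ ℕ :=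
  Finsupp.equivFunOnFinite.symm ![m 1, m 5]
def ι₃ (m : Fin 6 →₀ ℕ) : Fin 3 →₀ ℕ :=
  Finsupp.equivFunOnFinite.symm ![m 0, m 2, m 5]

@[simp] lemma ι₁_0 (m : Fin 6 →₀ ℕ) : ι₁ m 0 = 2 * m 0 + m 3 := rfl
@[simp] lemma ι₁_1 (m : Fin 6 →₀ ℕ) : ι₁ m 1 = 2 * m 1 + m 3 + m 4 := rfl
@[simp] lemma ι₁_2 (m : Fin 6 →₀ ℕ) : ι₁ m 2 = 2 * m 2 + m 4 := rfl
@[simp] lemma ι₂_0 (m : Fin 6 →₀ ℕ) : ι₂ m 0 = m 1 := rfl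
@[simp] lemma ι₂_1 (m : Fin 6 →₀ ℕ) : ι₂ m 1 = m 5 := rfl
@[simp] lemma ι₃_0 (m : Fin 6 →₀ ℕ) : ι₃ m 0 = m 0 := rfl
@[simp] lemma ι₃_1 (m : Fin 6 →₀ ℕ) : ι₃ m 1 = m 2 := rfl
@[simp] lemma ι₃_2 (m : Fin 6 →₀ ℕ) : ι₃ m 2 = m 5 := rfl

lemma phi1_monomial (m : Fin 6 →₀ ℕ) (c : ℚ) (h : m 5 = 0) :
    φ₁ (monomial m c) = monomial (ι₁ m) c := by
  rw [φ₁, aeval_monomial6, ι₁, monomial3, h, pow_zero, mul_one]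
  simp only [Matrix.cons_val_zero, Matrix.cons_val_one, Matrix.head_cons,
    Matrix.cons_val_two, Matrix.tail_cons, Matrix.cons_val_three, Matrix.cons_val_four,
    Matrix.cons_val_succ]
  ring

lemma phi1_monomial_zero (m : Fin 6 →₀ ℕ) (c : ℚ) (h : ¬ m 5 = 0) :
    φ₁ (monomial m c) = 0 := by
  rw [φ₁, aeval_monomial6,
    show (![X 0 ^ 2, X 1 ^ 2, X 2 ^ 2, X 0 * X 1, X 1 * X 2, 0] :
      Fin 6 → MvPolynomial (Fin 3) ℚ) 5 = 0 from rfl, zero_pow h]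
  ring

lemma phi2_monomial (m : Fin 6 →₀ ℕ) (c : ℚ)
    (h : m 0 = 0 ∧ m 2 = 0 ∧ m 3 = 0 ∧ m 4 = 0) :
    φ₂ (monomial m c) = monomial (ι₂ m) c := by
  obtain ⟨h0, h2, h3, h4⟩ := h
  rw [φ₂, aeval_monomial6, ι₂, monomial2, h0, h2, h3, h4]
  simp only [Matrix.cons_val_zero, Matrix.cons_val_one, Matrix.head_cons,
    Matrix.cons_val_two, Matrix.tail_cons, Matrix.cons_val_three, Matrix.cons_val_four,
    Matrix.cons_val_succ, pow_zero]
  rw [show (![0, X 0, 0, 0, 0, X 1] : Fin 6 → MvPolynomial (Fin 2) ℚ) 5 = X 1 from rfl]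
  ring

lemma phi2_monomial_zero (m : Fin 6 →₀ ℕ) (c : ℚ)
    (h : ¬(m 0 = 0 ∧ m 2 = 0 ∧ m 3 = 0 ∧ m 4 = 0)) : φ₂ (monomial m c) = 0 := by
  rw [φ₂, aeval_monomial6]
  have : m 0 ≠ 0 ∨ m 2 ≠ 0 ∨ m 3 ≠ 0 ∨ m 4 ≠ 0 := by tauto
  rcases this with h | h | h | h <;> simp [zero_pow h]

lemma phi3_monomial (m : Fin 6 →₀ ℕ) (c : ℚ)
    (h : m 1 = 0 ∧ m 3 = 0 ∧ m 4 = 0) :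
    φ₃ (monomial m c) = monomial (ι₃ m) c := by
  obtain ⟨h1, h3, h4⟩ := h
  rw [φ₃, aeval_monomial6, ι₃, monomial3, h1, h3, h4]
  simp only [Matrix.cons_val_zero, Matrix.cons_val_one, Matrix.head_cons,
    Matrix.cons_val_two, Matrix.tail_cons, Matrix.cons_val_three, Matrix.cons_val_four,
    Matrix.cons_val_succ, pow_zero]
  rw [show (![X 0, 0, X 1, 0, 0, X 2] : Fin 6 → MvPolynomial (Fin 3) ℚ) 5 = X 2 from rfl]
  ring

lemma phi3_monomial_zero (m : Fin 6 →₀ ℕ) (c : ℚ)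
    (h : ¬(m 1 = 0 ∧ m 3 = 0 ∧ m 4 = 0)) : φ₃ (monomial m c) = 0 := by
  rw [φ₃, aeval_monomial6]
  have : m 1 ≠ 0 ∨ m 3 ≠ 0 ∨ m 4 ≠ 0 := by tauto
  rcases this with h | h | h <;> simp [zero_pow h]

lemma ext6 {k m : Fin 6 →₀ ℕ} (h0 : k 0 = m 0) (h1 : k 1 = m 1) (h2 : k 2 = m 2)
    (h3 : k 3 = m 3) (h4 : k 4 = m 4) (h5 : k 5 = m 5) : k = m := by
  refine Finsupp.ext fun i => ?_
  fin_cases i <;> assumption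

/-- the reduction map on exponents -/
def red (m : Fin 6 →₀ ℕ) : Fin 6 →₀ ℕ :=
  Finsupp.equivFunOnFinite.symm
    ![m 0 + m 3 / 2, m 1 + m 3 / 2 + m 4 / 2, m 2 + m 4 / 2, m 3 % 2, m 4 % 2, m 5]

@[simp] lemma red_0 (m : Fin 6 →₀ ℕ) : red m 0 = m 0 + m 3 / 2 := rfl
@[simp] lemma red_1 (m : Fin 6 →₀ ℕ) : red m 1 = m 1 + m 3 / 2 + m 4 / 2 := rfl
@[simp] lemma red_2 (m : Fin 6 →₀ ℕ) : red m 2 = m 2 + m 4 / 2 := rfl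
@[simp] lemma red_3 (m : Fin 6 →₀ ℕ) : red m 3 = m 3 % 2 := rfl
@[simp] lemma red_4 (m : Fin 6 →₀ ℕ) : red m 4 = m 4 % 2 := rfl
@[simp] lemma red_5 (m : Fin 6 →₀ ℕ) : red m 5 = m 5 := rfl

lemma monomial_sub_red_mem (J : Ideal A) (h1 : (X 0 * X 1 - X 3 ^ 2 : A) ∈ J)
    (h2 : (X 1 * X 2 - X 4 ^ 2 : A) ∈ J) (m : Fin 6 →₀ ℕ) (c : ℚ) :
    monomial m c - monomial (red m) c ∈ J := by
  rw [← Ideal.Quotient.eq]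
  have e1 : ∀ k : Fin 6 →₀ ℕ, Ideal.Quotient.mk J (monomial k c) =
      Ideal.Quotient.mk J (C c) * (Ideal.Quotient.mk J (X 0)) ^ k 0 *
        (Ideal.Quotient.mk J (X 1)) ^ k 1 * (Ideal.Quotient.mk J (X 2)) ^ k 2 *
        (Ideal.Quotient.mk J (X 3)) ^ k 3 * (Ideal.Quotient.mk J (X 4)) ^ k 4 *
        (Ideal.Quotient.mk J (X 5)) ^ k 5 := by
    intro k
    rw [monomial_eq, Finsupp.prod_fintype _ _ (fun i => pow_zero _), Fin.prod_univ_six]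
    push_cast [map_mul, map_pow]
    ring
  rw [e1, e1]
  have hab : Ideal.Quotient.mk J (X 0) * Ideal.Quotient.mk J (X 1) =
      Ideal.Quotient.mk J (X 3) ^ 2 := by
    have := Ideal.Quotient.eq_zero_iff_mem.2 h1
    rw [map_sub, map_mul, map_pow, sub_eq_zero] at this
    exact this
  have hbc : Ideal.Quotient.mk J (X 1) * Ideal.Quotient.mk J (X 2) =
      Ideal.Quotient.mk J (X 4) ^ 2 := by
    have := Ideal.Quotient.eq_zero_iff_mem.2 h2
    rw [map_sub, map_mul, map_pow, sub_eq_zero] at this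
    exact this
  simp only [red_0, red_1, red_2, red_3, red_4, red_5]
  conv_lhs => rw [← Nat.div_add_mod (m 3) 2, ← Nat.div_add_mod (m 4) 2]
  rw [pow_add, pow_add, pow_mul, pow_mul, ← hab, ← hbc]
  ring

lemma coeff_extract {σ : Type} [Fintype σ] [DecidableEq σ]
    (φ : A →ₐ[ℚ] MvPolynomial σ ℚ) (ι : (Fin 6 →₀ ℕ) → (σ →₀ ℕ))
    (S : (Fin 6 →₀ ℕ) → Prop)
    (hmono : ∀ m c, S m → φ (monomial m c) = monomial (ι m) c)
    (hzero : ∀ m c, ¬ S m → φ (monomial m c) = 0)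
    (g : A) (m : Fin 6 →₀ ℕ) (hm : S m)
    (hinj : ∀ k ∈ g.support, S k → ι k = ι m → k = m) :
    coeff (ι m) (φ g) = coeff m g := by
  conv_lhs => rw [as_sum g, map_sum]
  rw [coeff_sum]
  rw [Finset.sum_eq_single m]
  · rw [hmono _ _ hm, coeff_monomial, if_pos rfl]
  · intro k hk hkm
    by_cases hSk : S k
    · rw [hmono _ _ hSk, coeff_monomial, if_neg]
      intro h
      exact hkm (hinj k hk hSk h)
    · rw [hzero _ _ hSk, coeff_zero]
  · intro hms
    rw [hmono _ _ hm, coeff_monomial, if_pos rfl, notMem_support_iff.1 hms]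

lemma sub_red_mem (J : Ideal A) (f : A) (K : (Fin 6 →₀ ℕ) → Prop) [DecidablePred K]
    (ρ : (Fin 6 →₀ ℕ) → (Fin 6 →₀ ℕ))
    (hkill : ∀ m c, K m → (monomial m c : A) ∈ J)
    (hred : ∀ m c, ¬ K m → (monomial m c - monomial (ρ m) c : A) ∈ J) :
    f - (∑ m ∈ f.support, if K m then 0 else monomial (ρ m) (coeff m f) : A) ∈ J := by
  nth_rw 1 [as_sum f]
  rw [← Finset.sum_sub_distrib]
  refine Ideal.sum_mem _ (fun m hm => ?_)
  by_cases hK : K m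
  · rw [if_pos hK, sub_zero]; exact hkill m _ hK
  · rw [if_neg hK]; exact hred m _ hK

lemma support_red_sum (f : A) (K : (Fin 6 →₀ ℕ) → Prop) [DecidablePred K]
    (ρ : (Fin 6 →₀ ℕ) → (Fin 6 →₀ ℕ)) (m : Fin 6 →₀ ℕ)
    (hm : m ∈ (∑ k ∈ f.support, if K k then 0 else monomial (ρ k) (coeff k f) : A).support) :
    ∃ k, ¬ K k ∧ m = ρ k := by
  have hc : coeff m (∑ k ∈ f.support, if K k then 0
      else monomial (ρ k) (coeff k f) : A) ≠ 0 := mem_support_iff.1 hm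
  rw [coeff_sum] at hc
  obtain ⟨k, _, hne⟩ := Finset.exists_ne_zero_of_sum_ne_zero hc
  by_cases hK : K k
  · rw [if_pos hK, coeff_zero] at hne; exact absurd rfl hne
  · refine ⟨k, hK, ?_⟩
    rw [if_neg hK, coeff_monomial] at hne
    by_contra hne2
    exact hne (if_neg (fun h => hne2 h.symm))

lemma monomial_mem_of_le (J : Ideal A) (k : Fin 6 →₀ ℕ) (hk : (monomial k 1 : A) ∈ J)
    (m : Fin 6 →₀ ℕ) (hle : k ≤ m) (c : ℚ) : (monomial m c : A) ∈ J := by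
  have : (monomial m c : A) = monomial (m - k) c * monomial k 1 := by
    rw [monomial_mul, mul_one, tsub_add_cancel_of_le hle]
  rw [this]
  exact Ideal.mul_mem_left _ _ hk

lemma X_eq_monomial (i : Fin 6) : (X i : A) = monomial (Finsupp.single i 1) 1 := rfl

lemma X_mul_X (i j : Fin 6) :
    (X i * X j : A) = monomial (Finsupp.single i 1 + Finsupp.single j 1) 1 := by
  rw [X_eq_monomial, X_eq_monomial, monomial_mul, one_mul]

lemma X_mul_X_mul_X (i j l : Fin 6) :
    (X i * X j * X l : A) =
      monomial (Finsupp.single i 1 + Finsupp.single j 1 + Finsupp.single l 1) 1 := by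
  rw [X_mul_X, X_eq_monomial, monomial_mul, one_mul]

lemma single_le (i : Fin 6) (m : Fin 6 →₀ ℕ) (h : m i ≠ 0) : Finsupp.single i 1 ≤ m := by
  rw [Finsupp.le_def]
  intro j
  rcases eq_or_ne i j with rfl | hij
  · simpa [Finsupp.single_apply] using Nat.one_le_iff_ne_zero.2 h
  · simp [Finsupp.single_apply, hij]

lemma add_single_le {i j : Fin 6} (hij : i ≠ j) (m : Fin 6 →₀ ℕ)
    (hi : m i ≠ 0) (hj : m j ≠ 0) :
    Finsupp.single i 1 + Finsupp.single j 1 ≤ m := by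
  rw [Finsupp.le_def]
  intro l
  rw [Finsupp.add_apply]
  rcases eq_or_ne i l with rfl | hil
  · simp [Finsupp.single_apply, hij.symm, Nat.one_le_iff_ne_zero.2 hi]
  · rcases eq_or_ne j l with rfl | hjl
    · simp [Finsupp.single_apply, hil, Nat.one_le_iff_ne_zero.2 hj]
    · simp [Finsupp.single_apply, hil, hjl]

lemma add_single_le3 {i j l : Fin 6} (hij : i ≠ j) (hil : i ≠ l) (hjl : j ≠ l)
    (m : Fin 6 →₀ ℕ) (hi : m i ≠ 0) (hj : m j ≠ 0) (hl : m l ≠ 0) :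
    Finsupp.single i 1 + Finsupp.single j 1 + Finsupp.single l 1 ≤ m := by
  rw [Finsupp.le_def]
  intro t
  rw [Finsupp.add_apply, Finsupp.add_apply]
  rcases eq_or_ne i t with rfl | hit
  · simp [Finsupp.single_apply, hij.symm, hil.symm, Nat.one_le_iff_ne_zero.2 hi]
  · rcases eq_or_ne j t with rfl | hjt
    · simp [Finsupp.single_apply, hit, hjl.symm, Nat.one_le_iff_ne_zero.2 hj]
    · rcases eq_or_ne l t with rfl | hlt
      · simp [Finsupp.single_apply, hit, hjt, Nat.one_le_iff_ne_zero.2 hl]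
      · simp [Finsupp.single_apply, hit, hjt, hlt]

def Iideal : Ideal A :=
  Ideal.span {X 0 * X 1 - X 3 ^ 2, X 1 * X 2 - X 4 ^ 2, X 3 * X 5, X 4 * X 5}
def P1 : Ideal A := Ideal.span {X 1 * X 2 - X 4 ^ 2, X 0 * X 1 - X 3 ^ 2, X 5}
def P2 : Ideal A := Ideal.span {X 0, X 2, X 3, X 4}
def P3 : Ideal A := Ideal.span {X 1, X 3, X 4}

lemma mem_I_1 : (X 0 * X 1 - X 3 ^ 2 : A) ∈ Iideal := Ideal.subset_span (by simp)
lemma mem_I_2 : (X 1 * X 2 - X 4 ^ 2 : A) ∈ Iideal := Ideal.subset_span (by simp)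
lemma mem_I_3 : (X 3 * X 5 : A) ∈ Iideal := Ideal.subset_span (by simp)
lemma mem_I_4 : (X 4 * X 5 : A) ∈ Iideal := Ideal.subset_span (by simp)
lemma mem_P1_1 : (X 1 * X 2 - X 4 ^ 2 : A) ∈ P1 := Ideal.subset_span (by simp)
lemma mem_P1_2 : (X 0 * X 1 - X 3 ^ 2 : A) ∈ P1 := Ideal.subset_span (by simp)
lemma mem_P1_3 : (X 5 : A) ∈ P1 := Ideal.subset_span (by simp)
lemma mem_P2_0 : (X 0 : A) ∈ P2 := Ideal.subset_span (by simp)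
lemma mem_P2_2 : (X 2 : A) ∈ P2 := Ideal.subset_span (by simp)
lemma mem_P2_3 : (X 3 : A) ∈ P2 := Ideal.subset_span (by simp)
lemma mem_P2_4 : (X 4 : A) ∈ P2 := Ideal.subset_span (by simp)
lemma mem_P3_1 : (X 1 : A) ∈ P3 := Ideal.subset_span (by simp)
lemma mem_P3_3 : (X 3 : A) ∈ P3 := Ideal.subset_span (by simp)
lemma mem_P3_4 : (X 4 : A) ∈ P3 := Ideal.subset_span (by simp)

lemma X0X1X5_mem_I : (X 0 * X 1 * X 5 : A) ∈ Iideal := by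
  have h : (X 0 * X 1 * X 5 : A) = X 5 * (X 0 * X 1 - X 3 ^ 2) + X 3 * (X 3 * X 5) := by ring
  rw [h]
  exact add_mem (Ideal.mul_mem_left _ _ mem_I_1) (Ideal.mul_mem_left _ _ mem_I_3)

lemma X1X2X5_mem_I : (X 1 * X 2 * X 5 : A) ∈ Iideal := by
  have h : (X 1 * X 2 * X 5 : A) = X 5 * (X 1 * X 2 - X 4 ^ 2) + X 4 * (X 4 * X 5) := by ring
  rw [h]
  exact add_mem (Ideal.mul_mem_left _ _ mem_I_2) (Ideal.mul_mem_left _ _ mem_I_4)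

/-- killed monomials for `I` -/
def KI (m : Fin 6 →₀ ℕ) : Prop :=
  m 5 ≠ 0 ∧ (m 3 ≠ 0 ∨ m 4 ≠ 0 ∨ (m 1 ≠ 0 ∧ (m 0 ≠ 0 ∨ m 2 ≠ 0)))

lemma kill_I (m : Fin 6 →₀ ℕ) (c : ℚ) (h : KI m) : (monomial m c : A) ∈ Iideal := by
  obtain ⟨h5, h⟩ := h
  rcases h with h3 | h4 | ⟨h1, h0 | h2⟩
  · exact monomial_mem_of_le _ _ (by rw [← X_mul_X]; exact mem_I_3) m
      (add_single_le (by decide) m h3 h5) c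
  · exact monomial_mem_of_le _ _ (by rw [← X_mul_X]; exact mem_I_4) m
      (add_single_le (by decide) m h4 h5) c
  · exact monomial_mem_of_le _ _ (by rw [← X_mul_X_mul_X]; exact X0X1X5_mem_I) m
      (add_single_le3 (by decide) (by decide) (by decide) m h0 h1 h5) c
  · exact monomial_mem_of_le _ _ (by rw [← X_mul_X_mul_X]; exact X1X2X5_mem_I) m
      (add_single_le3 (by decide) (by decide) (by decide) m h1 h2 h5) c

/-- normal monomials for `I` -/
def NI (m : Fin 6 →₀ ℕ) : Prop :=
  m 3 ≤ 1 ∧ m 4 ≤ 1 ∧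
    (m 5 = 0 ∨ (m 3 = 0 ∧ m 4 = 0 ∧ (m 1 = 0 ∨ (m 0 = 0 ∧ m 2 = 0))))

lemma NI_red (k : Fin 6 →₀ ℕ) (h : ¬ KI k) : NI (red k) := by
  rw [KI] at h
  push_neg at h
  rw [NI]
  simp only [red_0, red_1, red_2, red_3, red_4, red_5]
  refine ⟨by omega, by omega, ?_⟩
  by_cases h5 : k 5 = 0
  · exact Or.inl h5
  · obtain ⟨h3, h4, h102⟩ := h h5
    right
    refine ⟨by omega, by omega, ?_⟩
    by_cases h1 : k 1 = 0
    · exact Or.inl (by omega)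
    · obtain ⟨h0, h2⟩ := h102 h1
      exact Or.inr ⟨by omega, by omega⟩

-- easy directions: spans are inside kernels
lemma I_le_ker1 : Iideal ≤ RingHom.ker φ₁ := by
  rw [Iideal, Ideal.span_le]
  rintro x hx
  simp only [Set.mem_insert_iff, Set.mem_singleton_iff] at hx
  rcases hx with rfl | rfl | rfl | rfl <;>
    · simp only [SetLike.mem_coe, RingHom.mem_ker, map_sub, map_mul, map_pow,
        phi1_X0, phi1_X1, phi1_X2, phi1_X3, phi1_X4, phi1_X5]
      ring

lemma I_le_ker2 : Iideal ≤ RingHom.ker φ₂ := by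
  rw [Iideal, Ideal.span_le]
  rintro x hx
  simp only [Set.mem_insert_iff, Set.mem_singleton_iff] at hx
  rcases hx with rfl | rfl | rfl | rfl <;>
    · simp only [SetLike.mem_coe, RingHom.mem_ker, map_sub, map_mul, map_pow,
        phi2_X0, phi2_X1, phi2_X2, phi2_X3, phi2_X4, phi2_X5]
      ring

lemma I_le_ker3 : Iideal ≤ RingHom.ker φ₃ := by
  rw [Iideal, Ideal.span_le]
  rintro x hx
  simp only [Set.mem_insert_iff, Set.mem_singleton_iff] at hx
  rcases hx with rfl | rfl | rfl | rfl <;>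
    · simp only [SetLike.mem_coe, RingHom.mem_ker, map_sub, map_mul, map_pow,
        phi3_X0, phi3_X1, phi3_X2, phi3_X3, phi3_X4, phi3_X5]
      ring

lemma P1_le_ker1 : P1 ≤ RingHom.ker φ₁ := by
  rw [P1, Ideal.span_le]
  rintro x hx
  simp only [Set.mem_insert_iff, Set.mem_singleton_iff] at hx
  rcases hx with rfl | rfl | rfl <;>
    · simp only [SetLike.mem_coe, RingHom.mem_ker, map_sub, map_mul, map_pow,
        phi1_X0, phi1_X1, phi1_X2, phi1_X3, phi1_X4, phi1_X5]
      try ring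

lemma P2_le_ker2 : P2 ≤ RingHom.ker φ₂ := by
  rw [P2, Ideal.span_le]
  rintro x hx
  simp only [Set.mem_insert_iff, Set.mem_singleton_iff] at hx
  rcases hx with rfl | rfl | rfl | rfl <;>
    simp only [SetLike.mem_coe, RingHom.mem_ker, phi2_X0, phi2_X2, phi2_X3, phi2_X4]

lemma P3_le_ker3 : P3 ≤ RingHom.ker φ₃ := by
  rw [P3, Ideal.span_le]
  rintro x hx
  simp only [Set.mem_insert_iff, Set.mem_singleton_iff] at hx
  rcases hx with rfl | rfl | rfl <;>
    simp only [SetLike.mem_coe, RingHom.mem_ker, phi3_X1, phi3_X3, phi3_X4]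

lemma vanish1 (g : A) (hN : ∀ m ∈ g.support, m 3 ≤ 1 ∧ m 4 ≤ 1 ∧ m 5 = 0)
    (h1 : φ₁ g = 0) : g = 0 := by
  apply MvPolynomial.ext
  intro m
  rw [coeff_zero]
  by_cases hm : m ∈ g.support
  · obtain ⟨hm3, hm4, hm5⟩ := hN m hm
    have hinj : ∀ k ∈ g.support, (fun k : Fin 6 →₀ ℕ => k 5 = 0) k → ι₁ k = ι₁ m → k = m := by
      intro k hk hk5 he
      obtain ⟨hk3, hk4, _⟩ := hN k hk
      have e0 := DFunLike.congr_fun he (0 : Fin 3)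
      have e1 := DFunLike.congr_fun he (1 : Fin 3)
      have e2 := DFunLike.congr_fun he (2 : Fin 3)
      simp only [ι₁_0, ι₁_1, ι₁_2] at e0 e1 e2
      apply ext6 <;> omega
    have key := coeff_extract φ₁ ι₁ _ phi1_monomial phi1_monomial_zero g m hm5 hinj
    rw [h1, coeff_zero] at key
    exact key.symm
  · exact notMem_support_iff.1 hm

lemma vanish2 (g : A) (hN : ∀ m ∈ g.support, m 0 = 0 ∧ m 2 = 0 ∧ m 3 = 0 ∧ m 4 = 0)
    (h2 : φ₂ g = 0) : g = 0 := by
  apply MvPolynomial.ext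
  intro m
  rw [coeff_zero]
  by_cases hm : m ∈ g.support
  · have hSm := hN m hm
    have hinj : ∀ k ∈ g.support,
        (fun k : Fin 6 →₀ ℕ => k 0 = 0 ∧ k 2 = 0 ∧ k 3 = 0 ∧ k 4 = 0) k →
          ι₂ k = ι₂ m → k = m := by
      intro k hk hSk he
      have e0 := DFunLike.congr_fun he (0 : Fin 2)
      have e1 := DFunLike.congr_fun he (1 : Fin 2)
      simp only [ι₂_0, ι₂_1] at e0 e1
      obtain ⟨k0, k2, k3, k4⟩ := hSk
      obtain ⟨m0, m2, m3, m4⟩ := hSm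
      apply ext6 <;> omega
    have key := coeff_extract φ₂ ι₂ _ phi2_monomial phi2_monomial_zero g m hSm hinj
    rw [h2, coeff_zero] at key
    exact key.symm
  · exact notMem_support_iff.1 hm

lemma vanish3 (g : A) (hN : ∀ m ∈ g.support, m 1 = 0 ∧ m 3 = 0 ∧ m 4 = 0)
    (h3 : φ₃ g = 0) : g = 0 := by
  apply MvPolynomial.ext
  intro m
  rw [coeff_zero]
  by_cases hm : m ∈ g.support
  · have hSm := hN m hm
    have hinj : ∀ k ∈ g.support,
        (fun k : Fin 6 →₀ ℕ => k 1 = 0 ∧ k 3 = 0 ∧ k 4 = 0) k → ι₃ k = ι₃ m → k = m := by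
      intro k hk hSk he
      have e0 := DFunLike.congr_fun he (0 : Fin 3)
      have e1 := DFunLike.congr_fun he (1 : Fin 3)
      have e2 := DFunLike.congr_fun he (2 : Fin 3)
      simp only [ι₃_0, ι₃_1, ι₃_2] at e0 e1 e2
      obtain ⟨k1, k3, k4⟩ := hSk
      obtain ⟨m1, m3, m4⟩ := hSm
      apply ext6 <;> omega
    have key := coeff_extract φ₃ ι₃ _ phi3_monomial phi3_monomial_zero g m hSm hinj
    rw [h3, coeff_zero] at key
    exact key.symm
  · exact notMem_support_iff.1 hm

lemma vanish_inter (g : A) (hN : ∀ m ∈ g.support, NI m)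
    (h1 : φ₁ g = 0) (h2 : φ₂ g = 0) (h3 : φ₃ g = 0) : g = 0 := by
  apply MvPolynomial.ext
  intro m
  rw [coeff_zero]
  by_cases hm : m ∈ g.support
  swap
  · exact notMem_support_iff.1 hm
  obtain ⟨hm3, hm4, hrest⟩ := hN m hm
  by_cases h5 : m 5 = 0
  · have hinj : ∀ k ∈ g.support, (fun k : Fin 6 →₀ ℕ => k 5 = 0) k → ι₁ k = ι₁ m → k = m := by
      intro k hk hk5 he
      obtain ⟨hk3, hk4, _⟩ := hN k hk
      have e0 := DFunLike.congr_fun he (0 : Fin 3)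
      have e1 := DFunLike.congr_fun he (1 : Fin 3)
      have e2 := DFunLike.congr_fun he (2 : Fin 3)
      simp only [ι₁_0, ι₁_1, ι₁_2] at e0 e1 e2
      apply ext6 <;> omega
    have key := coeff_extract φ₁ ι₁ _ phi1_monomial phi1_monomial_zero g m h5 hinj
    rw [h1, coeff_zero] at key
    exact key.symm
  · obtain ⟨hm3', hm4', hm102⟩ := hrest.resolve_left h5
    by_cases h1' : m 1 = 0
    · have hSm : m 1 = 0 ∧ m 3 = 0 ∧ m 4 = 0 := ⟨h1', hm3', hm4'⟩
      have hinj : ∀ k ∈ g.support,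
          (fun k : Fin 6 →₀ ℕ => k 1 = 0 ∧ k 3 = 0 ∧ k 4 = 0) k → ι₃ k = ι₃ m → k = m := by
        intro k hk hSk he
        have e0 := DFunLike.congr_fun he (0 : Fin 3)
        have e1 := DFunLike.congr_fun he (1 : Fin 3)
        have e2 := DFunLike.congr_fun he (2 : Fin 3)
        simp only [ι₃_0, ι₃_1, ι₃_2] at e0 e1 e2
        obtain ⟨k1, k3, k4⟩ := hSk
        apply ext6 <;> omega
      have key := coeff_extract φ₃ ι₃ _ phi3_monomial phi3_monomial_zero g m hSm hinj
      rw [h3, coeff_zero] at key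
      exact key.symm
    · obtain ⟨hm0, hm2⟩ := hm102.resolve_left h1'
      have hSm : m 0 = 0 ∧ m 2 = 0 ∧ m 3 = 0 ∧ m 4 = 0 := ⟨hm0, hm2, hm3', hm4'⟩
      have hinj : ∀ k ∈ g.support,
          (fun k : Fin 6 →₀ ℕ => k 0 = 0 ∧ k 2 = 0 ∧ k 3 = 0 ∧ k 4 = 0) k →
            ι₂ k = ι₂ m → k = m := by
        intro k hk hSk he
        have e0 := DFunLike.congr_fun he (0 : Fin 2)
        have e1 := DFunLike.congr_fun he (1 : Fin 2)
        simp only [ι₂_0, ι₂_1] at e0 e1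
        obtain ⟨k0, k2, k3, k4⟩ := hSk
        apply ext6 <;> omega
      have key := coeff_extract φ₂ ι₂ _ phi2_monomial phi2_monomial_zero g m hSm hinj
      rw [h2, coeff_zero] at key
      exact key.symm

open Classical in
lemma inter_ker_le_I (f : A) (h1 : φ₁ f = 0) (h2 : φ₂ f = 0) (h3 : φ₃ f = 0) :
    f ∈ Iideal := by
  have hfg := sub_red_mem Iideal f KI red (fun m c h => kill_I m c h)
    (fun m c _ => monomial_sub_red_mem Iideal mem_I_1 mem_I_2 m c)
  set g : A := ∑ m ∈ f.support, if KI m then 0 else monomial (red m) (coeff m f) with hgdef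
  have hN : ∀ m ∈ g.support, NI m := by
    intro m hm
    obtain ⟨k, hk, rfl⟩ := support_red_sum f KI red m hm
    exact NI_red k hk
  have hg1 : φ₁ g = 0 := by
    have hx := RingHom.mem_ker.1 (I_le_ker1 hfg)
    rwa [map_sub, h1, zero_sub, neg_eq_zero] at hx
  have hg2 : φ₂ g = 0 := by
    have hx := RingHom.mem_ker.1 (I_le_ker2 hfg)
    rwa [map_sub, h2, zero_sub, neg_eq_zero] at hx
  have hg3 : φ₃ g = 0 := by
    have hx := RingHom.mem_ker.1 (I_le_ker3 hfg)
    rwa [map_sub, h3, zero_sub, neg_eq_zero] at hx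
  have hg0 : g = 0 := vanish_inter g hN hg1 hg2 hg3
  rwa [hg0, sub_zero] at hfg

open Classical in
lemma ker1_le_P1 : RingHom.ker φ₁ ≤ P1 := by
  intro f hf
  rw [RingHom.mem_ker] at hf
  have hfg := sub_red_mem P1 f (fun m => ¬ m 5 = 0) red
    (fun m c h => monomial_mem_of_le _ _
      (by rw [← X_eq_monomial]; exact mem_P1_3) m (single_le 5 m h) c)
    (fun m c _ => monomial_sub_red_mem P1 mem_P1_2 mem_P1_1 m c)
  set g : A := ∑ m ∈ f.support, if ¬ m 5 = 0 then 0 else monomial (red m) (coeff m f)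
    with hgdef
  have hN : ∀ m ∈ g.support, m 3 ≤ 1 ∧ m 4 ≤ 1 ∧ m 5 = 0 := by
    intro m hm
    obtain ⟨k, hk, rfl⟩ := support_red_sum f _ red m hm
    push_neg at hk
    simp only [red_3, red_4, red_5]
    omega
  have hg1 : φ₁ g = 0 := by
    have hx := RingHom.mem_ker.1 (P1_le_ker1 hfg)
    rwa [map_sub, hf, zero_sub, neg_eq_zero] at hx
  have hg0 : g = 0 := vanish1 g hN hg1
  rwa [hg0, sub_zero] at hfg

open Classical in
lemma ker2_le_P2 : RingHom.ker φ₂ ≤ P2 := by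
  intro f hf
  rw [RingHom.mem_ker] at hf
  have hfg := sub_red_mem P2 f (fun m => ¬ (m 0 = 0 ∧ m 2 = 0 ∧ m 3 = 0 ∧ m 4 = 0)) id
    (fun m c h => by
      have h' : m 0 ≠ 0 ∨ m 2 ≠ 0 ∨ m 3 ≠ 0 ∨ m 4 ≠ 0 := by tauto
      rcases h' with h' | h' | h' | h'
      · exact monomial_mem_of_le _ _ (by rw [← X_eq_monomial]; exact mem_P2_0) m
          (single_le 0 m h') c
      · exact monomial_mem_of_le _ _ (by rw [← X_eq_monomial]; exact mem_P2_2) m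
          (single_le 2 m h') c
      · exact monomial_mem_of_le _ _ (by rw [← X_eq_monomial]; exact mem_P2_3) m
          (single_le 3 m h') c
      · exact monomial_mem_of_le _ _ (by rw [← X_eq_monomial]; exact mem_P2_4) m
          (single_le 4 m h') c)
    (fun m c _ => by simp only [id_eq, sub_self]; exact P2.zero_mem)
  set g : A := ∑ m ∈ f.support,
    if ¬ (m 0 = 0 ∧ m 2 = 0 ∧ m 3 = 0 ∧ m 4 = 0) then 0 else monomial (id m) (coeff m f)
    with hgdef
  have hN : ∀ m ∈ g.support, m 0 = 0 ∧ m 2 = 0 ∧ m 3 = 0 ∧ m 4 = 0 := by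
    intro m hm
    obtain ⟨k, hk, rfl⟩ := support_red_sum f _ id m hm
    rw [not_not] at hk
    simpa using hk
  have hg2 : φ₂ g = 0 := by
    have hx := RingHom.mem_ker.1 (P2_le_ker2 hfg)
    rwa [map_sub, hf, zero_sub, neg_eq_zero] at hx
  have hg0 : g = 0 := vanish2 g hN hg2
  rwa [hg0, sub_zero] at hfg

open Classical in
lemma ker3_le_P3 : RingHom.ker φ₃ ≤ P3 := by
  intro f hf
  rw [RingHom.mem_ker] at hf
  have hfg := sub_red_mem P3 f (fun m => ¬ (m 1 = 0 ∧ m 3 = 0 ∧ m 4 = 0)) id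
    (fun m c h => by
      have h' : m 1 ≠ 0 ∨ m 3 ≠ 0 ∨ m 4 ≠ 0 := by tauto
      rcases h' with h' | h' | h'
      · exact monomial_mem_of_le _ _ (by rw [← X_eq_monomial]; exact mem_P3_1) m
          (single_le 1 m h') c
      · exact monomial_mem_of_le _ _ (by rw [← X_eq_monomial]; exact mem_P3_3) m
          (single_le 3 m h') c
      · exact monomial_mem_of_le _ _ (by rw [← X_eq_monomial]; exact mem_P3_4) m
          (single_le 4 m h') c)
    (fun m c _ => by simp only [id_eq, sub_self]; exact P3.zero_mem)
  set g : A := ∑ m ∈ f.support,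
    if ¬ (m 1 = 0 ∧ m 3 = 0 ∧ m 4 = 0) then 0 else monomial (id m) (coeff m f)
    with hgdef
  have hN : ∀ m ∈ g.support, m 1 = 0 ∧ m 3 = 0 ∧ m 4 = 0 := by
    intro m hm
    obtain ⟨k, hk, rfl⟩ := support_red_sum f _ id m hm
    rw [not_not] at hk
    simpa using hk
  have hg3 : φ₃ g = 0 := by
    have hx := RingHom.mem_ker.1 (P3_le_ker3 hfg)
    rwa [map_sub, hf, zero_sub, neg_eq_zero] at hx
  have hg0 : g = 0 := vanish3 g hN hg3
  rwa [hg0, sub_zero] at hfg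

lemma P1_eq_ker : P1 = RingHom.ker φ₁ := le_antisymm P1_le_ker1 ker1_le_P1
lemma P2_eq_ker : P2 = RingHom.ker φ₂ := le_antisymm P2_le_ker2 ker2_le_P2
lemma P3_eq_ker : P3 = RingHom.ker φ₃ := le_antisymm P3_le_ker3 ker3_le_P3

lemma P1_prime : P1.IsPrime := by rw [P1_eq_ker]; exact RingHom.ker_isPrime _
lemma P2_prime : P2.IsPrime := by rw [P2_eq_ker]; exact RingHom.ker_isPrime _
lemma P3_prime : P3.IsPrime := by rw [P3_eq_ker]; exact RingHom.ker_isPrime _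

lemma main_eq : Iideal = P1 ⊓ P2 ⊓ P3 := by
  apply le_antisymm
  · refine le_inf (le_inf ?_ ?_) ?_
    · rw [Iideal, Ideal.span_le]
      rintro x hx
      simp only [Set.mem_insert_iff, Set.mem_singleton_iff] at hx
      rcases hx with rfl | rfl | rfl | rfl
      · exact mem_P1_2
      · exact mem_P1_1
      · exact Ideal.mul_mem_left _ _ mem_P1_3
      · exact Ideal.mul_mem_left _ _ mem_P1_3
    · rw [Iideal, Ideal.span_le]
      rintro x hx
      simp only [Set.mem_insert_iff, Set.mem_singleton_iff] at hx
      rcases hx with rfl | rfl | rfl | rfl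
      · exact sub_mem (Ideal.mul_mem_right _ _ mem_P2_0)
          (Ideal.pow_mem_of_mem _ mem_P2_3 2 (by norm_num))
      · exact sub_mem (Ideal.mul_mem_left _ _ mem_P2_2)
          (Ideal.pow_mem_of_mem _ mem_P2_4 2 (by norm_num))
      · exact Ideal.mul_mem_right _ _ mem_P2_3
      · exact Ideal.mul_mem_right _ _ mem_P2_4
    · rw [Iideal, Ideal.span_le]
      rintro x hx
      simp only [Set.mem_insert_iff, Set.mem_singleton_iff] at hx
      rcases hx with rfl | rfl | rfl | rfl
      · exact sub_mem (Ideal.mul_mem_left _ _ mem_P3_1)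
          (Ideal.pow_mem_of_mem _ mem_P3_3 2 (by norm_num))
      · exact sub_mem (Ideal.mul_mem_right _ _ mem_P3_1)
          (Ideal.pow_mem_of_mem _ mem_P3_4 2 (by norm_num))
      · exact Ideal.mul_mem_right _ _ mem_P3_3
      · exact Ideal.mul_mem_right _ _ mem_P3_4
  · intro f hf
    rw [Submodule.mem_inf, Submodule.mem_inf] at hf
    obtain ⟨⟨hf1, hf2⟩, hf3⟩ := hf
    exact inter_ker_le_I f (RingHom.mem_ker.1 (P1_le_ker1 hf1))
      (RingHom.mem_ker.1 (P2_le_ker2 hf2)) (RingHom.mem_ker.1 (P3_le_ker3 hf3))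

end

end ToricFaceAux

/-- Let `A = ℚ[x₁, …, x₆]` (with `xᵢ = X (i-1)`) and
`I = (x₁x₂ − x₄², x₂x₃ − x₅², x₄x₆, x₅x₆)`. Then `I = P₁ ∩ P₂ ∩ P₃` where
`P₁ = (x₂x₃ − x₅², x₁x₂ − x₄², x₆)`, `P₂ = (x₁, x₃, x₄, x₅)` and `P₃ = (x₂, x₄, x₅)`,
and each of `P₁`, `P₂`, `P₃` is prime. -/
theorem toric_face_ring_prime_decomposition :
    Ideal.span {(X 0 * X 1 - X 3 ^ 2 : MvPolynomial (Fin 6) ℚ),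
        X 1 * X 2 - X 4 ^ 2, X 3 * X 5, X 4 * X 5} =
      Ideal.span {(X 1 * X 2 - X 4 ^ 2 : MvPolynomial (Fin 6) ℚ),
          X 0 * X 1 - X 3 ^ 2, X 5} ⊓
        Ideal.span {(X 0 : MvPolynomial (Fin 6) ℚ), X 2, X 3, X 4} ⊓
        Ideal.span {(X 1 : MvPolynomial (Fin 6) ℚ), X 3, X 4} ∧
    (Ideal.span {(X 1 * X 2 - X 4 ^ 2 : MvPolynomial (Fin 6) ℚ),
        X 0 * X 1 - X 3 ^ 2, X 5}).IsPrime ∧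
    (Ideal.span {(X 0 : MvPolynomial (Fin 6) ℚ), X 2, X 3, X 4}).IsPrime ∧
    (Ideal.span {(X 1 : MvPolynomial (Fin 6) ℚ), X 3, X 4}).IsPrime :=
  ⟨ToricFaceAux.main_eq, ToricFaceAux.P1_prime, ToricFaceAux.P2_prime, ToricFaceAux.P3_prime⟩
end

section
/- The ideal (x₁x₂ − x₄², x₂x₃ − x₅²) of the polynomial ring ℚ[x₁, …, x₅] in five variables over ℚ is a prime ideal. -/
open MvPolynomial

noncomputable section ToricAux

private def gφ : Fin 5 → MvPolynomial (Fin 3) ℚ :=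
  ![X 0 ^ 2, X 1 ^ 2, X 2 ^ 2, X 0 * X 1, X 1 * X 2]

private def φ : MvPolynomial (Fin 5) ℚ →ₐ[ℚ] MvPolynomial (Fin 3) ℚ := aeval gφ

private def Fm (s : Fin 5 →₀ ℕ) : Fin 3 →₀ ℕ :=
  Finsupp.single 0 (2 * s 0 + s 3) + Finsupp.single 1 (2 * s 1 + s 3 + s 4)
    + Finsupp.single 2 (2 * s 2 + s 4)

private lemma Fm_apply0 (s : Fin 5 →₀ ℕ) : Fm s 0 = 2 * s 0 + s 3 := by
  simp [Fm, Finsupp.single_apply]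

private lemma Fm_apply1 (s : Fin 5 →₀ ℕ) : Fm s 1 = 2 * s 1 + s 3 + s 4 := by
  simp [Fm, Finsupp.single_apply]

private lemma Fm_apply2 (s : Fin 5 →₀ ℕ) : Fm s 2 = 2 * s 2 + s 4 := by
  simp [Fm, Finsupp.single_apply]

private lemma φ_monomial (s : Fin 5 →₀ ℕ) (c : ℚ) :
    φ (monomial s c) = monomial (Fm s) c := by
  have h1 : (monomial s c : MvPolynomial (Fin 5) ℚ) = C c * ∏ i, X i ^ s i := by
    rw [monomial_eq, Finsupp.prod_pow]
  have h2 : (monomial (Fm s) c : MvPolynomial (Fin 3) ℚ) = C c * ∏ i, X i ^ (Fm s) i := by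
    rw [monomial_eq, Finsupp.prod_pow]
  rw [h1, h2, map_mul, map_prod]
  have hC : φ (C c) = C c := by simp [φ]
  rw [hC, Fin.prod_univ_five, Fin.prod_univ_three, Fm_apply0, Fm_apply1, Fm_apply2]
  simp only [map_pow, φ, aeval_X, gφ]
  simp only [Matrix.cons_val_zero, Matrix.cons_val_one, Matrix.head_cons,
    Matrix.cons_val_two, Matrix.tail_cons, Matrix.cons_val_three, Matrix.cons_val_four]
  ring

private lemma Fm_inj {s t : Fin 5 →₀ ℕ} (hs3 : s 3 ≤ 1) (hs4 : s 4 ≤ 1)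
    (ht3 : t 3 ≤ 1) (ht4 : t 4 ≤ 1) (h : Fm s = Fm t) : s = t := by
  have h0 : Fm s 0 = Fm t 0 := by rw [h]
  have h1 : Fm s 1 = Fm t 1 := by rw [h]
  have h2 : Fm s 2 = Fm t 2 := by rw [h]
  rw [Fm_apply0, Fm_apply0] at h0
  rw [Fm_apply1, Fm_apply1] at h1
  rw [Fm_apply2, Fm_apply2] at h2
  have e0 : s 0 = t 0 := by omega
  have e1 : s 1 = t 1 := by omega
  have e2 : s 2 = t 2 := by omega
  have e3 : s 3 = t 3 := by omega
  have e4 : s 4 = t 4 := by omega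
  ext i
  fin_cases i
  · exact e0
  · exact e1
  · exact e2
  · exact e3
  · exact e4

private def Iid : Ideal (MvPolynomial (Fin 5) ℚ) :=
  Ideal.span {X 0 * X 1 - X 3 ^ 2, X 1 * X 2 - X 4 ^ 2}

private lemma gen1_mem : (X 0 * X 1 - X 3 ^ 2 : MvPolynomial (Fin 5) ℚ) ∈ Iid :=
  Ideal.subset_span (Set.mem_insert _ _)

private lemma gen2_mem : (X 1 * X 2 - X 4 ^ 2 : MvPolynomial (Fin 5) ℚ) ∈ Iid :=
  Ideal.subset_span (Set.mem_insert_of_mem _ rfl)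

private def Red (p : MvPolynomial (Fin 5) ℚ) : Prop :=
  ∀ s ∈ p.support, s 3 ≤ 1 ∧ s 4 ≤ 1

private lemma red_monomial {s : Fin 5 →₀ ℕ} {c : ℚ} (h3 : s 3 ≤ 1) (h4 : s 4 ≤ 1) :
    Red (monomial s c) := by
  intro t ht
  rw [support_monomial] at ht
  split_ifs at ht
  · simp at ht
  · simp only [Finset.mem_singleton] at ht
    subst ht
    exact ⟨h3, h4⟩

private lemma reduce_monomial : ∀ (n : ℕ) (s : Fin 5 →₀ ℕ) (c : ℚ), s 3 + s 4 ≤ n →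
    ∃ r, Red r ∧ monomial s c - r ∈ Iid := by
  intro n
  induction n with
  | zero =>
    intro s c h
    exact ⟨monomial s c, red_monomial (by omega) (by omega), by simp⟩
  | succ m ih =>
    intro s c h
    by_cases h3 : 2 ≤ s 3
    · set s' : Fin 5 →₀ ℕ := s - Finsupp.single 3 2 with hs'
      have hs : s = s' + Finsupp.single 3 2 := by
        ext i
        rcases eq_or_ne i 3 with rfl | hi
        · simp [hs', Finsupp.single_apply]
          omega
        · simp [hs', Finsupp.single_apply, hi.symm, Ne.symm hi]
      set s'' : Fin 5 →₀ ℕ := s' + Finsupp.single 0 1 + Finsupp.single 1 1 with hs''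
      have hm1 : (monomial s c : MvPolynomial (Fin 5) ℚ) = monomial s' c * X 3 ^ 2 := by
        rw [X_pow_eq_monomial, monomial_mul, mul_one, ← hs]
      have hm2 : (monomial s'' c : MvPolynomial (Fin 5) ℚ) = monomial s' c * (X 0 * X 1) := by
        rw [X, X, monomial_mul, monomial_mul, mul_one, mul_one, hs'', add_assoc]
      have key : (monomial s c : MvPolynomial (Fin 5) ℚ) - monomial s'' c
          = monomial s' c * -(X 0 * X 1 - X 3 ^ 2) := by
        rw [hm1, hm2]; ring
      have hb : s'' 3 + s'' 4 ≤ m := by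
        have h''3 : s'' 3 = s 3 - 2 := by
          simp [hs'', hs', Finsupp.single_apply]
        have h''4 : s'' 4 = s 4 := by
          simp [hs'', hs', Finsupp.single_apply]
        omega
      obtain ⟨r, hr, hmem⟩ := ih s'' c hb
      refine ⟨r, hr, ?_⟩
      have : (monomial s c : MvPolynomial (Fin 5) ℚ) - r
          = (monomial s c - monomial s'' c) + (monomial s'' c - r) := by ring
      rw [this, key]
      exact add_mem (Ideal.mul_mem_left _ _ (neg_mem gen1_mem)) hmem
    · by_cases h4 : 2 ≤ s 4
      · set s' : Fin 5 →₀ ℕ := s - Finsupp.single 4 2 with hs'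
        have hs : s = s' + Finsupp.single 4 2 := by
          ext i
          rcases eq_or_ne i 4 with rfl | hi
          · simp [hs', Finsupp.single_apply]
            omega
          · simp [hs', Finsupp.single_apply, hi.symm, Ne.symm hi]
        set s'' : Fin 5 →₀ ℕ := s' + Finsupp.single 1 1 + Finsupp.single 2 1 with hs''
        have hm1 : (monomial s c : MvPolynomial (Fin 5) ℚ) = monomial s' c * X 4 ^ 2 := by
          rw [X_pow_eq_monomial, monomial_mul, mul_one, ← hs]
        have hm2 : (monomial s'' c : MvPolynomial (Fin 5) ℚ) = monomial s' c * (X 1 * X 2) := by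
          rw [X, X, monomial_mul, monomial_mul, mul_one, mul_one, hs'', add_assoc]
        have key : (monomial s c : MvPolynomial (Fin 5) ℚ) - monomial s'' c
            = monomial s' c * -(X 1 * X 2 - X 4 ^ 2) := by
          rw [hm1, hm2]; ring
        have hb : s'' 3 + s'' 4 ≤ m := by
          have h''3 : s'' 3 = s 3 := by
            simp [hs'', hs', Finsupp.single_apply]
          have h''4 : s'' 4 = s 4 - 2 := by
            simp [hs'', hs', Finsupp.single_apply]
          omega
        obtain ⟨r, hr, hmem⟩ := ih s'' c hb
        refine ⟨r, hr, ?_⟩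
        have : (monomial s c : MvPolynomial (Fin 5) ℚ) - r
            = (monomial s c - monomial s'' c) + (monomial s'' c - r) := by ring
        rw [this, key]
        exact add_mem (Ideal.mul_mem_left _ _ (neg_mem gen2_mem)) hmem
      · exact ⟨monomial s c, red_monomial (by omega) (by omega), by simp⟩

private lemma reduce (p : MvPolynomial (Fin 5) ℚ) : ∃ r, Red r ∧ p - r ∈ Iid := by
  induction p using MvPolynomial.induction_on' with
  | monomial s c => exact reduce_monomial (s 3 + s 4) s c le_rfl
  | add p q hp hq =>
    obtain ⟨r1, hr1, hm1⟩ := hp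
    obtain ⟨r2, hr2, hm2⟩ := hq
    refine ⟨r1 + r2, ?_, ?_⟩
    · intro s hs
      rcases Finset.mem_union.mp (MvPolynomial.support_add hs) with h | h
      · exact hr1 s h
      · exact hr2 s h
    · have : p + q - (r1 + r2) = (p - r1) + (q - r2) := by ring
      rw [this]
      exact add_mem hm1 hm2

private lemma Iid_le_ker : Iid ≤ RingHom.ker φ.toRingHom := by
  rw [Iid, Ideal.span_le]
  rintro x hx
  simp only [Set.mem_insert_iff, Set.mem_singleton_iff] at hx
  rcases hx with rfl | rfl <;>
  · rw [SetLike.mem_coe, RingHom.mem_ker]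
    simp only [AlgHom.toRingHom_eq_coe, RingHom.coe_coe, map_sub, map_mul, map_pow, φ, aeval_X, gφ]
    simp only [Matrix.cons_val_zero, Matrix.cons_val_one, Matrix.head_cons,
      Matrix.cons_val_two, Matrix.tail_cons, Matrix.cons_val_three, Matrix.cons_val_four]
    ring

private lemma red_ker_eq_zero {r : MvPolynomial (Fin 5) ℚ} (hr : Red r) (h : φ r = 0) :
    r = 0 := by
  ext s₀
  rw [coeff_zero]
  by_cases hs₀ : s₀ ∈ r.support
  swap
  · exact notMem_support_iff.mp hs₀
  obtain ⟨h3, h4⟩ := hr s₀ hs₀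
  have hφ : φ r = ∑ s ∈ r.support, monomial (Fm s) (coeff s r) := by
    conv_lhs => rw [r.as_sum]
    rw [map_sum]
    exact Finset.sum_congr rfl fun s _ => φ_monomial s (coeff s r)
  rw [h] at hφ
  have hc := congrArg (coeff (Fm s₀)) hφ
  rw [coeff_zero, coeff_sum] at hc
  simp only [coeff_monomial] at hc
  rw [Finset.sum_eq_single s₀ (fun b hb hbne => by
      rw [if_neg]
      intro hF
      exact hbne (Fm_inj (hr b hb).1 (hr b hb).2 h3 h4 hF))
    (fun hns => absurd hs₀ hns), if_pos rfl] at hc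
  exact hc.symm

end ToricAux

/-- The ideal `(x₁x₂ − x₄², x₂x₃ − x₅²)` of `ℚ[x₁, …, x₅]` (with `xᵢ = X (i-1)`)
is a prime ideal. -/
theorem toric_binomial_ideal_isPrime :
    (Ideal.span {(X 0 * X 1 - X 3 ^ 2 : MvPolynomial (Fin 5) ℚ),
        X 1 * X 2 - X 4 ^ 2}).IsPrime := by
  have hker : Iid = RingHom.ker φ.toRingHom := by
    apply le_antisymm Iid_le_ker
    intro p hp
    obtain ⟨r, hred, hmem⟩ := reduce p
    have hφr : φ r = 0 := by
      have h1 := Iid_le_ker hmem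
      rw [RingHom.mem_ker] at h1 hp
      simp only [AlgHom.toRingHom_eq_coe, RingHom.coe_coe, map_sub] at h1 hp
      have : φ p - φ r = 0 := h1
      rw [hp] at this
      linear_combination -this
    have hr0 : r = 0 := red_ker_eq_zero hred hφr
    rw [hr0, sub_zero] at hmem
    exact hmem
  show Iid.IsPrime
  rw [hker]
  exact RingHom.ker_isPrime _
end

section
/- Let A = ℚ[x₁, …, x₆] be the polynomial ring in six variables over ℚ and let I = (x₁x₂ − x₄², x₂x₃ − x₅², x₄x₆, x₅x₆). Then the Krull dimension of the quotient ring A/I equals 3. -/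
open MvPolynomial Order

set_option synthInstance.maxHeartbeats 1000000
set_option maxHeartbeats 1600000


lemma ringKrullDim_le_of_isIntegral {R S : Type*} [CommRing R] [CommRing S] [Algebra R S]
    (h : ∀ s : S, IsIntegral R s) : ringKrullDim S ≤ ringKrullDim R := by
  apply krullDim_le_of_strictMono
    (fun p : PrimeSpectrum S => (⟨p.asIdeal.comap (algebraMap R S), inferInstance⟩ :
      PrimeSpectrum R))
  intro p q hpq
  obtain ⟨x, hxq, hxp⟩ := SetLike.exists_of_lt (show p.asIdeal < q.asIdeal from hpq)
  exact Ideal.comap_lt_comap_of_integral_mem_sdiff (le_of_lt hpq) ⟨hxq, hxp⟩ (h x)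



lemma krullDim_le_three_of_collapse {R : Type*} [CommRing R]
    (hdep : ∀ a : Fin 4 → R, ∃ (k : Fin 4 → ℕ) (x : Fin 4 → R),
      a 0 ^ k 0 * ((a 1 ^ k 1 * ((a 2 ^ k 2 * ((a 3 ^ k 3 * (1 + a 3 * x 3)) + a 2 * x 2))
        + a 1 * x 1)) + a 0 * x 0) = 0) :
    ringKrullDim R ≤ 3 := by
  rcases subsingleton_or_nontrivial R with hs | hn
  · exact (ringKrullDim_eq_bot_of_subsingleton).le.trans bot_le
  rw [ringKrullDim, krullDim_eq_iSup_length,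
    show ((3 : WithBot ℕ∞)) = ((3 : ℕ∞) : WithBot ℕ∞) by rfl, WithBot.coe_le_coe]
  apply iSup_le
  intro c
  by_contra hlen
  have h4 : 4 ≤ c.length := by
    rw [not_le] at hlen
    exact_mod_cast hlen
  -- five primes
  set P : Fin 5 → PrimeSpectrum R := fun j => c.toFun ⟨j, by omega⟩ with hP
  have hmono : ∀ {i j : Fin 5}, i < j → P i < P j := by
    intro i j hij
    exact c.strictMono (Fin.mk_lt_mk.mpr hij)
  obtain ⟨a0, ha0, ha0'⟩ := SetLike.exists_of_lt
    (show (P 0).asIdeal < (P 1).asIdeal from hmono (by decide))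
  obtain ⟨a1, ha1, ha1'⟩ := SetLike.exists_of_lt
    (show (P 1).asIdeal < (P 2).asIdeal from hmono (by decide))
  obtain ⟨a2, ha2, ha2'⟩ := SetLike.exists_of_lt
    (show (P 2).asIdeal < (P 3).asIdeal from hmono (by decide))
  obtain ⟨a3, ha3, ha3'⟩ := SetLike.exists_of_lt
    (show (P 3).asIdeal < (P 4).asIdeal from hmono (by decide))
  obtain ⟨k, x, hid⟩ := hdep ![a0, a1, a2, a3]
  simp only [Matrix.cons_val_zero, Matrix.cons_val_one, Matrix.head_cons,
    Matrix.cons_val_two, Matrix.tail_cons, Matrix.cons_val_three] at hid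
  have hle : ∀ {i j : Fin 5}, i ≤ j → (P i).asIdeal ≤ (P j).asIdeal := by
    intro i j hij
    rcases eq_or_lt_of_le hij with rfl | h
    · exact le_rfl
    · exact (hmono h).le
  have hp0 : (P 0).asIdeal.IsPrime := (P 0).2
  have hp1 : (P 1).asIdeal.IsPrime := (P 1).2
  have hp2 : (P 2).asIdeal.IsPrime := (P 2).2
  have hp3 : (P 3).asIdeal.IsPrime := (P 3).2
  have hp4 : (P 4).asIdeal.IsPrime := (P 4).2
  -- T3 ∉ P3
  set T3 : R := a3 ^ k 3 * (1 + a3 * x 3) with hT3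
  have hT3n : T3 ∉ (P 3).asIdeal := by
    intro h
    rcases hp3.mem_or_mem h with h | h
    · exact ha3' (hp3.mem_of_pow_mem _ h)
    · have h1 : (1 : R) + a3 * x 3 ∈ (P 4).asIdeal := hle (by decide) h
      have h2 : a3 * x 3 ∈ (P 4).asIdeal := Ideal.mul_mem_right _ _ ha3
      have : (1 : R) ∈ (P 4).asIdeal := by
        simpa using Ideal.sub_mem _ h1 h2
      exact hp4.ne_top (Ideal.eq_top_iff_one _ |>.2 this)
  set T2 : R := a2 ^ k 2 * (T3 + a2 * x 2) with hT2
  set T1 : R := a1 ^ k 1 * (T2 + a1 * x 1) with hT1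
  have h0 : a0 ^ k 0 * (T1 + a0 * x 0) ∈ (P 0).asIdeal := by
    rw [hT1, hT2, hT3]; rw [hid]; exact Ideal.zero_mem _
  -- peel a0
  have hA0 : a0 ^ k 0 ∉ (P 0).asIdeal := fun h => ha0' (hp0.mem_of_pow_mem _ h)
  have h1 : T1 + a0 * x 0 ∈ (P 0).asIdeal := (hp0.mem_or_mem h0).resolve_left hA0
  have hT1m : T1 ∈ (P 1).asIdeal := by
    have := Ideal.sub_mem _ (hle (show (0:Fin 5) ≤ 1 by decide) h1)
      (Ideal.mul_mem_right (x 0) _ ha0)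
    simpa using this
  have hA1 : a1 ^ k 1 ∉ (P 1).asIdeal := fun h => ha1' (hp1.mem_of_pow_mem _ h)
  have h2 : T2 + a1 * x 1 ∈ (P 1).asIdeal := (hp1.mem_or_mem (hT1 ▸ hT1m)).resolve_left hA1
  have hT2m : T2 ∈ (P 2).asIdeal := by
    have := Ideal.sub_mem _ (hle (show (1:Fin 5) ≤ 2 by decide) h2)
      (Ideal.mul_mem_right (x 1) _ ha1)
    simpa using this
  have hA2 : a2 ^ k 2 ∉ (P 2).asIdeal := fun h => ha2' (hp2.mem_of_pow_mem _ h)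
  have h3 : T3 + a2 * x 2 ∈ (P 2).asIdeal := (hp2.mem_or_mem (hT2 ▸ hT2m)).resolve_left hA2
  have hT3m : T3 ∈ (P 3).asIdeal := by
    have := Ideal.sub_mem _ (hle (show (2:Fin 5) ≤ 3 by decide) h3)
      (Ideal.mul_mem_right (x 2) _ ha2)
    simpa using this
  exact hT3n hT3m


lemma finrank_restrictDegree (n m : ℕ) :
    Module.finrank ℚ (restrictDegree (Fin n) ℚ m) = (m + 1) ^ n := by
  classical
  have e : {d : Fin n →₀ ℕ | ∀ i, d i ≤ m} ≃ (Fin n → Fin (m + 1)) :=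
    { toFun := fun d i => ⟨d.1 i, Nat.lt_succ_of_le (d.2 i)⟩
      invFun := fun f => ⟨Finsupp.equivFunOnFinite.symm fun i => (f i : ℕ), fun i => by
        simpa using Nat.lt_succ_iff.mp (f i).2⟩
      left_inv := fun d => by
        ext i
        simp
      right_inv := fun f => by
        ext i
        simp }
  haveI : Fintype {d : Fin n →₀ ℕ | ∀ i, d i ≤ m} := Fintype.ofEquiv _ e.symm
  rw [show restrictDegree (Fin n) ℚ m =
    restrictSupport ℚ {d : Fin n →₀ ℕ | ∀ i, d i ≤ m} from rfl,
    Module.finrank_eq_card_basis (basisRestrictSupport ℚ _), Fintype.card_congr e]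
  simp

lemma totalDegree_aeval_le {n p : ℕ} (a : Fin n → MvPolynomial (Fin p) ℚ) (D : ℕ)
    (hD : ∀ i, (a i).totalDegree ≤ D) (Q : MvPolynomial (Fin n) ℚ) :
    (aeval a Q).totalDegree ≤ Q.totalDegree * D := by
  classical
  rw [aeval_def, eval₂_eq']
  refine (totalDegree_finset_sum _ _).trans (Finset.sup_le fun α hα => ?_)
  calc (C (Q.coeff α) * ∏ i, a i ^ α i).totalDegree
      ≤ (C (Q.coeff α) : MvPolynomial (Fin p) ℚ).totalDegree
          + (∏ i, a i ^ α i).totalDegree := totalDegree_mul _ _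
    _ = (∏ i, a i ^ α i).totalDegree := by rw [totalDegree_C, zero_add]
    _ ≤ ∑ i, (a i ^ α i).totalDegree := totalDegree_finset_prod _ _
    _ ≤ ∑ i, α i * D := Finset.sum_le_sum fun i _ =>
        (totalDegree_pow _ _).trans (Nat.mul_le_mul_left _ (hD i))
    _ = (∑ i, α i) * D := by rw [Finset.sum_mul]
    _ ≤ Q.totalDegree * D := by
        refine Nat.mul_le_mul_right _ ?_
        have := le_totalDegree hα
        rwa [Finsupp.sum_fintype _ _ (fun _ => rfl)] at this

lemma exists_annihilator (a : Fin 4 → MvPolynomial (Fin 3) ℚ) :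
    ∃ Q : MvPolynomial (Fin 4) ℚ, Q ≠ 0 ∧ aeval a Q = 0 := by
  classical
  set D : ℕ := (Finset.univ.sup fun i => (a i).totalDegree) + 1 with hD
  have hDa : ∀ i, (a i).totalDegree ≤ D := fun i => by
    rw [hD]
    exact (Finset.le_sup (f := fun i => (a i).totalDegree) (Finset.mem_univ i)).trans
      (Nat.le_succ _)
  set m : ℕ := (4 * D + 1) ^ 3 with hm
  set M : ℕ := 4 * m * D with hM
  -- the linear map
  have hmem : ∀ Q : MvPolynomial (Fin 4) ℚ, Q ∈ restrictDegree (Fin 4) ℚ m →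
      (aeval a Q).totalDegree ≤ M := by
    intro Q hQ
    have hQd : Q.totalDegree ≤ 4 * m := by
      rw [totalDegree]
      refine Finset.sup_le fun α hα => ?_
      rw [Finsupp.sum_fintype _ _ (fun _ => rfl)]
      calc ∑ i : Fin 4, α i ≤ ∑ _i : Fin 4, m :=
            Finset.sum_le_sum fun i _ => (mem_restrictDegree _ Q m).mp hQ α hα i
        _ = 4 * m := by simp [Finset.sum_const, mul_comm]
      -- fix later if needed
    calc (aeval a Q).totalDegree ≤ Q.totalDegree * D := totalDegree_aeval_le a D hDa Q
      _ ≤ 4 * m * D := Nat.mul_le_mul_right _ hQd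
  let L : restrictDegree (Fin 4) ℚ m →ₗ[ℚ] restrictTotalDegree (Fin 3) ℚ M :=
    LinearMap.codRestrict _ ((aeval a).toLinearMap ∘ₗ (restrictDegree (Fin 4) ℚ m).subtype)
      (fun Q => by
        rw [mem_restrictTotalDegree]
        exact hmem Q.1 Q.2)
  have hrank : Module.finrank ℚ (restrictTotalDegree (Fin 3) ℚ M)
      < Module.finrank ℚ (restrictDegree (Fin 4) ℚ m) := by
    have h1 : Module.finrank ℚ (restrictTotalDegree (Fin 3) ℚ M)
        ≤ Module.finrank ℚ (restrictDegree (Fin 3) ℚ M) :=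
      Submodule.finrank_mono (restrictTotalDegree_le_restrictDegree _ _ _)
    rw [finrank_restrictDegree] at h1 ⊢
    refine lt_of_le_of_lt h1 ?_
    -- (M+1)^3 < (m+1)^4
    have hD1 : 1 ≤ D := Nat.le_add_left _ _
    have key : M + 1 ≤ (4 * D + 1) * (m + 1) := by
      rw [hM]; nlinarith [hm]
    calc (M + 1) ^ 3 ≤ ((4 * D + 1) * (m + 1)) ^ 3 := Nat.pow_le_pow_left key 3
      _ = m * (m + 1) ^ 3 := by rw [mul_pow, ← hm]
      _ < (m + 1) * (m + 1) ^ 3 := by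
          have h3 : 0 < (m + 1) ^ 3 := by positivity
          exact Nat.mul_lt_mul_of_pos_right (Nat.lt_succ_self m) h3
      _ = (m + 1) ^ 4 := by ring
  have hni : ¬ Function.Injective L := by
    intro hinj
    exact absurd (LinearMap.finrank_le_finrank_of_injective hinj) (not_le.mpr hrank)
  rw [Function.not_injective_iff] at hni
  obtain ⟨u, v, huv, hne⟩ := hni
  refine ⟨u.1 - v.1, ?_, ?_⟩
  · intro h
    exact hne (Subtype.coe_injective (by linear_combination (norm := module) h))
  · have : (L u : MvPolynomial (Fin 3) ℚ) = L v := by rw [huv]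
    simpa [L, map_sub, sub_eq_zero] using this


variable {R : Type*} [CommRing R]

private lemma prod_split (g : Fin 4 → R) (j : Fin 4) :
    ∏ i, g i = (∏ i ∈ Finset.Iio j, g i) * g j * ∏ i ∈ Finset.Ioi j, g i := by
  have key : ∀ j' : Fin 4,
      (∏ i ∈ Finset.Iio j', g i) * g j' * ∏ i ∈ Finset.Ioi j', g i = ∏ i, g i := by
    intro j'
    fin_cases j'
    · show (∏ i ∈ Finset.Iio (0 : Fin 4), g i) * g 0 * ∏ i ∈ Finset.Ioi (0 : Fin 4), g i = _
      rw [show Finset.Iio (0 : Fin 4) = ∅ by decide,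
        show Finset.Ioi (0 : Fin 4) = {1, 2, 3} by decide, Fin.prod_univ_four, Finset.prod_empty,
        Finset.prod_insert (by decide), Finset.prod_pair (by decide)]
      try ring
    · show (∏ i ∈ Finset.Iio (1 : Fin 4), g i) * g 1 * ∏ i ∈ Finset.Ioi (1 : Fin 4), g i = _
      rw [show Finset.Iio (1 : Fin 4) = {0} by decide,
        show Finset.Ioi (1 : Fin 4) = {2, 3} by decide, Fin.prod_univ_four,
        Finset.prod_singleton, Finset.prod_pair (by decide)]
      try ring
    · show (∏ i ∈ Finset.Iio (2 : Fin 4), g i) * g 2 * ∏ i ∈ Finset.Ioi (2 : Fin 4), g i = _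
      rw [show Finset.Iio (2 : Fin 4) = {0, 1} by decide,
        show Finset.Ioi (2 : Fin 4) = {3} by decide, Fin.prod_univ_four,
        Finset.prod_singleton, Finset.prod_pair (by decide)]
      try ring
    · show (∏ i ∈ Finset.Iio (3 : Fin 4), g i) * g 3 * ∏ i ∈ Finset.Ioi (3 : Fin 4), g i = _
      rw [show Finset.Iio (3 : Fin 4) = {0, 1, 2} by decide,
        show Finset.Ioi (3 : Fin 4) = ∅ by decide, Fin.prod_univ_four, Finset.prod_empty,
        Finset.prod_insert (by decide), Finset.prod_pair (by decide)]
      try ring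
  exact (key j).symm

lemma mvPoly3_collapse (a : Fin 4 → MvPolynomial (Fin 3) ℚ) :
    ∃ (k : Fin 4 → ℕ) (x : Fin 4 → MvPolynomial (Fin 3) ℚ),
      a 0 ^ k 0 * ((a 1 ^ k 1 * ((a 2 ^ k 2 * ((a 3 ^ k 3 * (1 + a 3 * x 3)) + a 2 * x 2))
        + a 1 * x 1)) + a 0 * x 0) = 0 := by
  classical
  obtain ⟨Q, hQ0, hQa⟩ := exists_annihilator a
  have hne : Q.support.Nonempty := support_nonempty.mpr hQ0
  obtain ⟨μ, hμ, hmin⟩ := Q.support.exists_min_image (fun α => toLex α) hne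
  set c : ℚ := Q.coeff μ with hc
  have hc0 : c ≠ 0 := mem_support_iff.mp hμ
  have hwit : ∀ α ∈ Q.support.erase μ, ∃ j : Fin 4, (∀ d, d < j → μ d = α d) ∧ μ j < α j := by
    intro α hα
    have h1 : toLex μ < toLex α :=
      lt_of_le_of_ne (hmin α (Finset.mem_of_mem_erase hα))
        (fun h => (Finset.ne_of_mem_erase hα) (toLex.injective h).symm)
    exact Finsupp.lex_def.mp h1
  choose! J hJ1 hJ2 using hwit
  set x : Fin 4 → MvPolynomial (Fin 3) ℚ := fun j => ∑ α ∈ Q.support.erase μ,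
    if J α = j then (c⁻¹ * Q.coeff α) •
      (a j ^ (α j - μ j - 1) * ∏ i ∈ Finset.Ioi j, a i ^ α i) else 0 with hx
  refine ⟨fun i => μ i, x, ?_⟩
  -- flat identity, multiplied by C c
  have flat : C c * ((∏ i, a i ^ μ i)
      + ∑ j : Fin 4, (∏ i ∈ Finset.Iio j, a i ^ μ i) * a j ^ (μ j + 1) * x j) = 0 := by
    have he : aeval a Q = ∑ α ∈ Q.support, C (Q.coeff α) * ∏ i, a i ^ α i := by
      rw [aeval_def, eval₂_eq']
      rfl
    have hsplit : ∑ α ∈ Q.support, C (Q.coeff α) * ∏ i, a i ^ α i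
        = C c * ∏ i, a i ^ μ i + ∑ α ∈ Q.support.erase μ, C (Q.coeff α) * ∏ i, a i ^ α i := by
      rw [← Finset.add_sum_erase _ _ hμ]
    have herase : ∑ α ∈ Q.support.erase μ, C (Q.coeff α) * ∏ i, a i ^ α i
        = ∑ j : Fin 4, C c * ((∏ i ∈ Finset.Iio j, a i ^ μ i) * a j ^ (μ j + 1) * x j) := by
      have hxj : ∀ j : Fin 4, C c * ((∏ i ∈ Finset.Iio j, a i ^ μ i) * a j ^ (μ j + 1) * x j)
          = ∑ α ∈ Q.support.erase μ, (if J α = j then C (Q.coeff α) * ∏ i, a i ^ α i else 0) := by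
        intro j
        rw [hx]
        rw [Finset.mul_sum, Finset.mul_sum]
        refine Finset.sum_congr rfl fun α hα => ?_
        by_cases hj : J α = j
        · rw [if_pos hj, if_pos hj]
          subst hj
          have h2 := hJ2 α hα
          have h1 := hJ1 α hα
          rw [smul_eq_C_mul, map_mul]
          have hppow : a (J α) ^ (μ (J α) + 1) * a (J α) ^ (α (J α) - μ (J α) - 1)
              = a (J α) ^ (α (J α)) := by
            rw [← pow_add]
            congr 1
            omega
          have hpre : (∏ i ∈ Finset.Iio (J α), a i ^ μ i)
              = ∏ i ∈ Finset.Iio (J α), a i ^ α i := by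
            refine Finset.prod_congr rfl fun i hi => ?_
            rw [h1 i (Finset.mem_Iio.mp hi)]
          have hC : (C c : MvPolynomial (Fin 3) ℚ) * (C c⁻¹ * C (Q.coeff α))
              = C (Q.coeff α) := by
            rw [← map_mul, ← map_mul, mul_inv_cancel_left₀ hc0]
          calc C c * ((∏ i ∈ Finset.Iio (J α), a i ^ μ i) * a (J α) ^ (μ (J α) + 1)
                * (C c⁻¹ * C (Q.coeff α)
                  * (a (J α) ^ (α (J α) - μ (J α) - 1) * ∏ i ∈ Finset.Ioi (J α), a i ^ α i)))
              = (C c * (C c⁻¹ * C (Q.coeff α))) * ((∏ i ∈ Finset.Iio (J α), a i ^ μ i)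
                * (a (J α) ^ (μ (J α) + 1) * a (J α) ^ (α (J α) - μ (J α) - 1))
                * ∏ i ∈ Finset.Ioi (J α), a i ^ α i) := by ring
            _ = C (Q.coeff α) * ((∏ i ∈ Finset.Iio (J α), a i ^ α i) * a (J α) ^ (α (J α))
                * ∏ i ∈ Finset.Ioi (J α), a i ^ α i) := by rw [hC, hppow, hpre]
            _ = C (Q.coeff α) * ∏ i, a i ^ α i := by rw [← prod_split]
        · simp [hj]
      rw [Finset.sum_congr rfl fun j _ => hxj j, Finset.sum_comm]
      refine (Finset.sum_congr rfl fun α hα => ?_).symm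
      rw [Finset.sum_ite_eq Finset.univ (J α) (fun _ => C (Q.coeff α) * ∏ i, a i ^ α i)]
      simp
    rw [mul_add, Finset.mul_sum, ← herase, ← hsplit, ← he, hQa]
  -- remove C c
  have hnz : (∏ i, a i ^ μ i)
      + ∑ j : Fin 4, (∏ i ∈ Finset.Iio j, a i ^ μ i) * a j ^ (μ j + 1) * x j = 0 := by
    rcases mul_eq_zero.mp flat with h | h
    · exact absurd (by rwa [C_eq_zero] at h) hc0
    · exact h
  -- convert flat to nested
  have hIio0 : Finset.Iio (0 : Fin 4) = ∅ := by decide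
  have hIio1 : Finset.Iio (1 : Fin 4) = {0} := by decide
  have hIio2 : Finset.Iio (2 : Fin 4) = ({0, 1} : Finset (Fin 4)) := by decide
  have hIio3 : Finset.Iio (3 : Fin 4) = ({0, 1, 2} : Finset (Fin 4)) := by decide
  rw [Fin.sum_univ_four, Fin.prod_univ_four, hIio0, hIio1, hIio2, hIio3, Finset.prod_empty,
    Finset.prod_singleton, Finset.prod_pair (by decide), Finset.prod_insert (by decide),
    Finset.prod_pair (by decide)] at hnz
  rw [show ∀ β : MvPolynomial (Fin 3) ℚ, β = 0 ↔ β = 0 from fun _ => Iff.rfl]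
  linear_combination hnz

noncomputable section ToricFace

abbrev Apoly : Type := MvPolynomial (Fin 6) ℚ

abbrev Itoric : Ideal Apoly :=
  Ideal.span {(X 0 * X 1 - X 3 ^ 2 : Apoly), X 1 * X 2 - X 4 ^ 2, X 3 * X 5, X 4 * X 5}

abbrev Storic : Type := Apoly ⧸ Itoric

abbrev mkS : Apoly →+* Storic := Ideal.Quotient.mk Itoric

lemma g1_mem : (X 0 * X 1 - X 3 ^ 2 : Apoly) ∈ Itoric := Ideal.subset_span (by simp)
lemma g2_mem : (X 1 * X 2 - X 4 ^ 2 : Apoly) ∈ Itoric := Ideal.subset_span (by simp)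
lemma g3_mem : (X 3 * X 5 : Apoly) ∈ Itoric := Ideal.subset_span (by simp)
lemma g4_mem : (X 4 * X 5 : Apoly) ∈ Itoric := Ideal.subset_span (by simp)

-- the three "Noether normalization" elements
def tS : Fin 3 → Storic := ![mkS (X 0) + mkS (X 5), mkS (X 1) + mkS (X 5), mkS (X 2) + mkS (X 5)]

def phiS : MvPolynomial (Fin 3) ℚ →+* Storic := (aeval tS).toRingHom

lemma upper_bound : ringKrullDim Storic ≤ 3 := by
  letI : Algebra (MvPolynomial (Fin 3) ℚ) Storic := phiS.toAlgebra
  have hmap : algebraMap (MvPolynomial (Fin 3) ℚ) Storic = phiS := rfl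
  -- integrality of mk (X 5)
  have h5 : IsIntegral (MvPolynomial (Fin 3) ℚ) (mkS (X 5)) := by
    refine ⟨Polynomial.X * (Polynomial.X - Polynomial.C (X 0)) *
      (Polynomial.X - Polynomial.C (X 1)), ?_, ?_⟩
    · exact ((Polynomial.monic_X.mul (Polynomial.monic_X_sub_C _)).mul
        (Polynomial.monic_X_sub_C _))
    · rw [hmap]
      simp only [Polynomial.eval₂_mul, Polynomial.eval₂_sub, Polynomial.eval₂_X,
        Polynomial.eval₂_C]
      have hφ0 : phiS (X 0) = mkS (X 0) + mkS (X 5) := by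
        simp [phiS, tS]
      have hφ1 : phiS (X 1) = mkS (X 1) + mkS (X 5) := by
        simp [phiS, tS]
      rw [hφ0, hφ1]
      have : (mkS (X 5) * (mkS (X 5) - (mkS (X 0) + mkS (X 5))) *
          (mkS (X 5) - (mkS (X 1) + mkS (X 5))))
          = mkS (X 5 * (X 5 - (X 0 + X 5)) * (X 5 - (X 1 + X 5))) := by
        push_cast [map_mul, map_sub, map_add]
        ring
      rw [this, Ideal.Quotient.eq_zero_iff_mem]
      have heq : (X 5 * (X 5 - (X 0 + X 5)) * (X 5 - (X 1 + X 5)) : Apoly)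
          = X 5 * (X 0 * X 1 - X 3 ^ 2) + X 3 * (X 3 * X 5) := by ring
      rw [heq]
      exact Ideal.add_mem _ (Ideal.mul_mem_left _ _ g1_mem) (Ideal.mul_mem_left _ _ g3_mem)
  have hphiX : ∀ j : Fin 3, phiS (X j) = tS j := fun j => by simp [phiS]
  have h0 : IsIntegral (MvPolynomial (Fin 3) ℚ) (mkS (X 0)) := by
    have : mkS (X 0) = algebraMap (MvPolynomial (Fin 3) ℚ) Storic (X 0) - mkS (X 5) := by
      rw [hmap, hphiX]
      simp [tS]
    rw [this]
    exact (isIntegral_algebraMap).sub h5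
  have h1 : IsIntegral (MvPolynomial (Fin 3) ℚ) (mkS (X 1)) := by
    have : mkS (X 1) = algebraMap (MvPolynomial (Fin 3) ℚ) Storic (X 1) - mkS (X 5) := by
      rw [hmap, hphiX]
      simp [tS]
    rw [this]
    exact (isIntegral_algebraMap).sub h5
  have h2 : IsIntegral (MvPolynomial (Fin 3) ℚ) (mkS (X 2)) := by
    have : mkS (X 2) = algebraMap (MvPolynomial (Fin 3) ℚ) Storic (X 2) - mkS (X 5) := by
      rw [hmap, hphiX]
      simp [tS]
    rw [this]
    exact (isIntegral_algebraMap).sub h5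
  have h3 : IsIntegral (MvPolynomial (Fin 3) ℚ) (mkS (X 3)) := by
    refine IsIntegral.of_pow (n := 2) (by norm_num) ?_
    have : mkS (X 3) ^ 2 = mkS (X 0) * mkS (X 1) := by
      rw [← map_pow, ← map_mul, Ideal.Quotient.mk_eq_mk_iff_sub_mem]
      have hn := Itoric.neg_mem g1_mem
      rwa [neg_sub] at hn
    rw [this]
    exact h0.mul h1
  have h4 : IsIntegral (MvPolynomial (Fin 3) ℚ) (mkS (X 4)) := by
    refine IsIntegral.of_pow (n := 2) (by norm_num) ?_
    have : mkS (X 4) ^ 2 = mkS (X 1) * mkS (X 2) := by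
      rw [← map_pow, ← map_mul, Ideal.Quotient.mk_eq_mk_iff_sub_mem]
      have hn := Itoric.neg_mem g2_mem
      rwa [neg_sub] at hn
    rw [this]
    exact h1.mul h2
  have hXint : ∀ i : Fin 6, IsIntegral (MvPolynomial (Fin 3) ℚ) (mkS (X i)) := by
    intro i
    fin_cases i <;> assumption
  have hall : ∀ s : Storic, IsIntegral (MvPolynomial (Fin 3) ℚ) s := by
    intro s
    obtain ⟨q, rfl⟩ := Ideal.Quotient.mk_surjective s
    induction q using MvPolynomial.induction_on with
    | C r =>
      have : (mkS (C r) : Storic) = algebraMap (MvPolynomial (Fin 3) ℚ) Storic (C r) := by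
        rw [hmap]
        simp only [phiS, AlgHom.toRingHom_eq_coe, RingHom.coe_coe, aeval_C]
        rfl
      rw [this]
      exact isIntegral_algebraMap
    | add p q hp hq =>
      rw [map_add]
      exact hp.add hq
    | mul_X p i hp =>
      rw [map_mul]
      exact hp.mul (hXint i)
  calc ringKrullDim Storic ≤ ringKrullDim (MvPolynomial (Fin 3) ℚ) :=
        ringKrullDim_le_of_isIntegral hall
    _ ≤ 3 := krullDim_le_three_of_collapse mvPoly3_collapse


abbrev R3 : Type := MvPolynomial (Fin 3) ℚ

def w0 : Fin 6 → R3 := ![X 0, 0, X 1, 0, 0, X 2]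
def w1 : Fin 6 → R3 := ![0, 0, X 1, 0, 0, X 2]
def w2 : Fin 6 → R3 := ![0, 0, 0, 0, 0, X 2]
def w3 : Fin 6 → R3 := ![0, 0, 0, 0, 0, 0]

def ps0 : Apoly →ₐ[ℚ] R3 := aeval w0
def ps1 : Apoly →ₐ[ℚ] R3 := aeval w1
def ps2 : Apoly →ₐ[ℚ] R3 := aeval w2
def ps3 : Apoly →ₐ[ℚ] R3 := aeval w3

def sg0 : R3 →ₐ[ℚ] R3 := aeval ![0, X 1, X 2]
def sg1 : R3 →ₐ[ℚ] R3 := aeval ![X 0, 0, X 2]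
def sg2 : R3 →ₐ[ℚ] R3 := aeval ![X 0, X 1, 0]

-- entry lemmas
lemma w0e0 : w0 0 = X 0 := rfl
lemma w0e1 : w0 1 = 0 := rfl
lemma w0e2 : w0 2 = X 1 := rfl
lemma w0e3 : w0 3 = 0 := rfl
lemma w0e4 : w0 4 = 0 := rfl
lemma w0e5 : w0 5 = X 2 := rfl
lemma w1e0 : w1 0 = 0 := rfl
lemma w1e1 : w1 1 = 0 := rfl
lemma w1e2 : w1 2 = X 1 := rfl
lemma w1e3 : w1 3 = 0 := rfl
lemma w1e4 : w1 4 = 0 := rfl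
lemma w1e5 : w1 5 = X 2 := rfl
lemma w2e0 : w2 0 = 0 := rfl
lemma w2e1 : w2 1 = 0 := rfl
lemma w2e2 : w2 2 = 0 := rfl
lemma w2e3 : w2 3 = 0 := rfl
lemma w2e4 : w2 4 = 0 := rfl
lemma w2e5 : w2 5 = X 2 := rfl
lemma w3e : ∀ i, w3 i = 0 := by
  intro i
  fin_cases i <;> rfl

lemma sg0e0 : sg0 (X 0) = 0 := by rw [sg0, aeval_X]; rfl
lemma sg0e1 : sg0 (X 1) = X 1 := by rw [sg0, aeval_X]; rfl
lemma sg0e2 : sg0 (X 2) = X 2 := by rw [sg0, aeval_X]; rfl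
lemma sg1e0 : sg1 (X 0) = X 0 := by rw [sg1, aeval_X]; rfl
lemma sg1e1 : sg1 (X 1) = 0 := by rw [sg1, aeval_X]; rfl
lemma sg1e2 : sg1 (X 2) = X 2 := by rw [sg1, aeval_X]; rfl
lemma sg2e0 : sg2 (X 0) = X 0 := by rw [sg2, aeval_X]; rfl
lemma sg2e1 : sg2 (X 1) = X 1 := by rw [sg2, aeval_X]; rfl
lemma sg2e2 : sg2 (X 2) = 0 := by rw [sg2, aeval_X]; rfl

lemma ker0 : Itoric ≤ RingHom.ker ps0.toRingHom := by
  rw [Ideal.span_le]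
  rintro g hg
  simp only [Set.mem_insert_iff, Set.mem_singleton_iff] at hg
  rcases hg with rfl | rfl | rfl | rfl <;>
    simp [RingHom.mem_ker, ps0, aeval_X, w0e0, w0e1, w0e2, w0e3, w0e4, w0e5]

lemma ker1 : Itoric ≤ RingHom.ker ps1.toRingHom := by
  rw [Ideal.span_le]
  rintro g hg
  simp only [Set.mem_insert_iff, Set.mem_singleton_iff] at hg
  rcases hg with rfl | rfl | rfl | rfl <;>
    simp [RingHom.mem_ker, ps1, aeval_X, w1e0, w1e1, w1e2, w1e3, w1e4, w1e5]

lemma ker2 : Itoric ≤ RingHom.ker ps2.toRingHom := by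
  rw [Ideal.span_le]
  rintro g hg
  simp only [Set.mem_insert_iff, Set.mem_singleton_iff] at hg
  rcases hg with rfl | rfl | rfl | rfl <;>
    simp [RingHom.mem_ker, ps2, aeval_X, w2e0, w2e1, w2e2, w2e3, w2e4, w2e5]

lemma ker3 : Itoric ≤ RingHom.ker ps3.toRingHom := by
  rw [Ideal.span_le]
  rintro g hg
  simp only [Set.mem_insert_iff, Set.mem_singleton_iff] at hg
  rcases hg with rfl | rfl | rfl | rfl <;>
    simp [RingHom.mem_ker, ps3, aeval_X, w3e]

def lift0 : Storic →+* R3 := Ideal.Quotient.lift Itoric ps0.toRingHom (fun _ ha => ker0 ha)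
def lift1 : Storic →+* R3 := Ideal.Quotient.lift Itoric ps1.toRingHom (fun _ ha => ker1 ha)
def lift2 : Storic →+* R3 := Ideal.Quotient.lift Itoric ps2.toRingHom (fun _ ha => ker2 ha)
def lift3 : Storic →+* R3 := Ideal.Quotient.lift Itoric ps3.toRingHom (fun _ ha => ker3 ha)

def P0 : PrimeSpectrum Storic := ⟨RingHom.ker lift0, RingHom.ker_isPrime _⟩
def P1 : PrimeSpectrum Storic := ⟨RingHom.ker lift1, RingHom.ker_isPrime _⟩
def P2 : PrimeSpectrum Storic := ⟨RingHom.ker lift2, RingHom.ker_isPrime _⟩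
def P3 : PrimeSpectrum Storic := ⟨RingHom.ker lift3, RingHom.ker_isPrime _⟩

lemma fact01 : sg0.comp ps0 = ps1 := by
  apply MvPolynomial.algHom_ext
  intro i
  fin_cases i <;>
    simp [ps0, ps1, aeval_X, w0e0, w0e1, w0e2, w0e3, w0e4, w0e5,
      w1e0, w1e1, w1e2, w1e3, w1e4, w1e5, sg0e0, sg0e1, sg0e2]

lemma fact12 : sg1.comp ps1 = ps2 := by
  apply MvPolynomial.algHom_ext
  intro i
  fin_cases i <;>
    simp [ps1, ps2, aeval_X, w1e0, w1e1, w1e2, w1e3, w1e4, w1e5,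
      w2e0, w2e1, w2e2, w2e3, w2e4, w2e5, sg1e0, sg1e1, sg1e2]

lemma fact23 : sg2.comp ps2 = ps3 := by
  apply MvPolynomial.algHom_ext
  intro i
  fin_cases i <;>
    simp [ps2, ps3, aeval_X, w2e0, w2e1, w2e2, w2e3, w2e4, w2e5, w3e, sg2e0, sg2e1, sg2e2]

lemma le01 : P0 ≤ P1 := by
  intro s hs
  obtain ⟨q, rfl⟩ := Ideal.Quotient.mk_surjective s
  have h0 : ps0 q = 0 := hs
  show ps1 q = 0
  rw [← fact01]
  simp [h0]

lemma le12 : P1 ≤ P2 := by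
  intro s hs
  obtain ⟨q, rfl⟩ := Ideal.Quotient.mk_surjective s
  have h0 : ps1 q = 0 := hs
  show ps2 q = 0
  rw [← fact12]
  simp [h0]

lemma le23 : P2 ≤ P3 := by
  intro s hs
  obtain ⟨q, rfl⟩ := Ideal.Quotient.mk_surjective s
  have h0 : ps2 q = 0 := hs
  show ps3 q = 0
  rw [← fact23]
  simp [h0]

lemma lt01 : P0 < P1 := by
  refine lt_of_le_of_ne le01 fun h => ?_
  have hm : mkS (X 0) ∈ P1.asIdeal := by
    show ps1 (X 0) = 0
    rw [ps1, aeval_X, w1e0]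
  rw [← h] at hm
  have : ps0 (X 0) = 0 := hm
  rw [ps0, aeval_X, w0e0] at this
  exact X_ne_zero _ this

lemma lt12 : P1 < P2 := by
  refine lt_of_le_of_ne le12 fun h => ?_
  have hm : mkS (X 2) ∈ P2.asIdeal := by
    show ps2 (X 2) = 0
    rw [ps2, aeval_X, w2e2]
  rw [← h] at hm
  have : ps1 (X 2) = 0 := hm
  rw [ps1, aeval_X, w1e2] at this
  exact X_ne_zero _ this

lemma lt23 : P2 < P3 := by
  refine lt_of_le_of_ne le23 fun h => ?_
  have hm : mkS (X 5) ∈ P3.asIdeal := by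
    show ps3 (X 5) = 0
    rw [ps3, aeval_X, w3e]
  rw [← h] at hm
  have : ps2 (X 5) = 0 := hm
  rw [ps2, aeval_X, w2e5] at this
  exact X_ne_zero _ this

lemma lower_bound : (3 : WithBot ℕ∞) ≤ ringKrullDim Storic := by
  haveI : Nonempty (PrimeSpectrum Storic) := ⟨P0⟩
  let c : LTSeries (PrimeSpectrum Storic) :=
    ⟨3, ![P0, P1, P2, P3], by
      intro i
      fin_cases i
      · exact lt01
      · exact lt12
      · exact lt23⟩
  have := LTSeries.length_le_krullDim c
  have h3 : c.length = 3 := rfl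
  rw [h3] at this
  exact_mod_cast this



/-- Let `A = ℚ[x₁, …, x₆]` (with `xᵢ = X (i-1)`) and
`I = (x₁x₂ − x₄², x₂x₃ − x₅², x₄x₆, x₅x₆)`. Then the Krull dimension of the toric face
ring `A/I` equals `3`. -/
theorem toric_face_ring_krullDim :
    ringKrullDim (MvPolynomial (Fin 6) ℚ ⧸
      Ideal.span {(X 0 * X 1 - X 3 ^ 2 : MvPolynomial (Fin 6) ℚ),
        X 1 * X 2 - X 4 ^ 2, X 3 * X 5, X 4 * X 5}) = 3 := by
  exact le_antisymm upper_bound lower_bound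

end ToricFace
end

section
/- Let A = ℚ[x₁, …, x₅, y₁, …, y₅] be the polynomial ring in ten variables over ℚ, and let J = (x₁y₂ − x₂y₁, x₂y₃ − x₃y₂, x₃y₄ − x₄y₃, x₄y₅ − x₅y₄) be the binomial edge ideal of the path graph on 5 vertices. Then the Krull dimension of the quotient ring A/J equals 6. -/
open MvPolynomial Module

namespace BEI


def box (n t : ℕ) : Set (Fin n →₀ ℕ) := {α | ∀ i, α i ≤ t}

noncomputable def boxEquiv (n t : ℕ) : box n t ≃ (Fin n → Fin (t+1)) where
  toFun α i := ⟨α.1 i, Nat.lt_succ_of_le (α.2 i)⟩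
  invFun g := ⟨Finsupp.equivFunOnFinite.symm (fun i => (g i : ℕ)), fun i => by
    simpa using Nat.lt_succ_iff.mp (g i).2⟩
  left_inv := by rintro ⟨α, hα⟩; ext i; simp
  right_inv := by intro g; ext i; simp

noncomputable instance (n t : ℕ) : Fintype (box n t) := Fintype.ofEquiv _ (boxEquiv n t).symm

lemma card_box (n t : ℕ) : Fintype.card (box n t) = (t+1)^n := by
  rw [Fintype.card_congr (boxEquiv n t), Fintype.card_fun]
  simp

variable {D : Type*} [CommRing D] [IsDomain D] [Algebra ℚ D]

set_option maxHeartbeats 4000000 in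
lemma key_dep (z : Fin 6 → D) (M : D) (hM0 : M ≠ 0)
    (f N : Fin 7 → D)
    (hN : ∀ j, N j ∈ Algebra.adjoin ℚ (Set.range z))
    (hMmem : M ∈ Algebra.adjoin ℚ (Set.range z))
    (hfM : ∀ j, f j * M = N j) :
    ∃ Q : MvPolynomial (Fin 7) ℚ, Q ≠ 0 ∧ aeval f Q = 0 := by
  classical
  rw [Algebra.adjoin_range_eq_range_aeval] at hN hMmem
  choose Nt hNt using hN

  obtain ⟨Mt, hMt'⟩ := hMmem
  have hNt : ∀ j, aeval z (Nt j) = N j := fun j => hNt j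
  have hMt : aeval z Mt = M := hMt'
  set k : ℕ := (Finset.univ.sup fun j => (Nt j).totalDegree) ⊔ Mt.totalDegree ⊔ 1 with hk
  have hk1 : 1 ≤ k := le_sup_right
  have hkN : ∀ j, (Nt j).totalDegree ≤ k := fun j => by
    rw [hk]; exact le_sup_of_le_left (le_sup_of_le_left (Finset.le_sup (f := fun j => (Nt j).totalDegree) (Finset.mem_univ j)))
  have hkM : Mt.totalDegree ≤ k := by rw [hk]; exact le_sup_of_le_left le_sup_right
  clear_value k
  clear hk
  set t : ℕ := (7*k+1)^7 - 1 with ht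
  set d : ℕ := 7*t with hd
  set B : ℕ := d*k with hB
  -- the numeric inequality
  have hpos : 1 ≤ (7*k+1)^7 := Nat.one_le_pow _ _ (by omega)
  have ht1 : t + 1 = (7*k+1)^7 := by rw [ht]; omega
  clear_value t d B
  have hnum : (B+1)^6 < (t+1)^7 := by
    have h1 : B + 1 ≤ 7*k*(t+1) := by
      have : B = 7*k*t := by rw [hB, hd]; ring
      rw [this, Nat.mul_add, Nat.mul_one]
      omega
    calc (B+1)^6 ≤ (7*k*(t+1))^6 := Nat.pow_le_pow_left h1 6
      _ = (7*k)^6 * (t+1)^6 := by rw [Nat.mul_pow]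
      _ < (t+1) * (t+1)^6 := by
          have h2 : (7*k)^6 < t+1 := by
            rw [ht1]
            calc (7*k)^6 < (7*k+1)^6 := Nat.pow_lt_pow_left (by omega) (by norm_num)
              _ < (7*k+1)^7 := Nat.pow_lt_pow_right (by omega) (by norm_num)
          exact mul_lt_mul_of_pos_right h2 (Nat.pow_pos (Nat.succ_pos t))
      _ = (t+1)^7 := by ring
  -- the family F
  set F : (Fin 7 →₀ ℕ) → MvPolynomial (Fin 6) ℚ :=
    fun α => (∏ i, Nt i ^ α i) * Mt ^ (d - ∑ i, α i) with hF
  have hsum_le : ∀ α : Fin 7 →₀ ℕ, α ∈ box 7 t → (∑ i, α i) ≤ d := by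
    intro α hα
    calc (∑ i, α i) ≤ ∑ _i : Fin 7, t := Finset.sum_le_sum (fun i _ => hα i)
      _ = 7*t := by simp [Finset.sum_const, Nat.mul_comm]
      _ ≤ d := le_of_eq hd.symm
  have hdegF : ∀ α ∈ box 7 t, (F α).totalDegree ≤ B := by
    intro α hα
    have h1 : (∏ i, Nt i ^ α i).totalDegree ≤ (∑ i, α i) * k := by
      refine le_trans (totalDegree_finset_prod _ _) ?_
      rw [Finset.sum_mul]
      exact Finset.sum_le_sum fun i _ => le_trans (totalDegree_pow _ _)
        (Nat.mul_le_mul_left _ (hkN i))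
    have h2 : (Mt ^ (d - ∑ i, α i)).totalDegree ≤ (d - ∑ i, α i) * k :=
      le_trans (totalDegree_pow _ _) (Nat.mul_le_mul_left _ hkM)
    refine le_trans (totalDegree_mul _ _) ?_
    refine le_trans (Nat.add_le_add h1 h2) ?_
    rw [← Nat.add_mul, hB]
    refine Nat.mul_le_mul_right _ ?_
    have := hsum_le α hα
    omega
  -- target space
  set g : box 6 B → MvPolynomial (Fin 6) ℚ := fun γ => monomial γ.1 (1:ℚ) with hg
  set W : Submodule ℚ (MvPolynomial (Fin 6) ℚ) := Submodule.span ℚ (Set.range g) with hW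
  have hFW : ∀ α ∈ box 7 t, F α ∈ W := by
    intro α hα
    rw [(F α).as_sum]
    refine Submodule.sum_mem _ fun γ hγ => ?_
    have hγB : γ ∈ box 6 B := by
      intro i
      calc γ i ≤ ∑ j, γ j := Finset.single_le_sum (fun j _ => Nat.zero_le _) (Finset.mem_univ i)
        _ = γ.sum fun _ e => e := (Finsupp.sum_fintype γ (fun _ e => e) (fun _ => rfl)).symm
        _ ≤ (F α).totalDegree := le_totalDegree hγ
        _ ≤ B := hdegF α hα
    have : monomial γ (coeff γ (F α)) = (coeff γ (F α)) • g ⟨γ, hγB⟩ := by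
      simp [hg, smul_monomial]
    rw [this]
    exact Submodule.smul_mem _ _ (Submodule.subset_span ⟨_, rfl⟩)
  -- linear map and noninjectivity
  set Φ : (box 7 t → ℚ) →ₗ[ℚ] MvPolynomial (Fin 6) ℚ :=
    Fintype.linearCombination ℚ (fun i : box 7 t => F i.1) with hΦ
  have hΦW : ∀ v, Φ v ∈ W := by
    intro v
    rw [hΦ, Fintype.linearCombination_apply]
    exact Submodule.sum_mem _ fun i _ => Submodule.smul_mem _ _ (hFW i.1 i.2)
  set Φ' : (box 7 t → ℚ) →ₗ[ℚ] W := (Φ).codRestrict W hΦW with hΦ'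
  have hWfin : FiniteDimensional ℚ W := FiniteDimensional.span_of_finite ℚ (Set.finite_range g)
  have hninj : ¬ Function.Injective Φ' := by
    intro hinj
    have h1 := LinearMap.finrank_le_finrank_of_injective hinj
    have h2 : finrank ℚ (box 7 t → ℚ) = (t+1)^7 := by
      rw [finrank_fintype_fun_eq_card, card_box]
    have h3 : finrank ℚ W ≤ (B+1)^6 := by
      refine le_trans (finrank_range_le_card g) ?_
      rw [card_box]
    omega
  -- extract kernel element
  rw [Function.not_injective_iff] at hninj
  obtain ⟨a, b, hab, hne⟩ := hninj
  set q : box 7 t → ℚ := a - b with hq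
  have hq0 : q ≠ 0 := sub_ne_zero.mpr hne
  have hΦq : Φ q = 0 := by
    have : Φ' q = 0 := by rw [hq, map_sub, hab, sub_self]
    have := congrArg Subtype.val this
    simpa [hΦ'] using this
  -- the polynomial Q
  set Q : MvPolynomial (Fin 7) ℚ := ∑ i : box 7 t, q i • monomial i.1 (1:ℚ) with hQ
  have hQne : Q ≠ 0 := by
    intro h0
    have li : LinearIndependent ℚ (fun i : box 7 t => monomial (R := ℚ) i.1 (1:ℚ)) := by
      have := (basisMonomials (Fin 7) ℚ).linearIndependent
      rw [coe_basisMonomials] at this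
      exact this.comp Subtype.val Subtype.val_injective
    have := Fintype.linearIndependent_iff.mp li q (by rw [← hQ, h0])
    exact hq0 (funext this)
  refine ⟨Q, hQne, ?_⟩
  -- push the relation through aeval z
  have hrel : ∑ i : box 7 t, q i • F i.1 = 0 := by
    have := hΦq
    rwa [hΦ, Fintype.linearCombination_apply] at this
  have hrelD : ∑ i : box 7 t, q i • ((aeval z) (F i.1)) = 0 := by
    have := congrArg (aeval z) hrel
    rw [map_sum, map_zero] at this
    simpa [map_smul] using this
  have hFz : ∀ α ∈ box 7 t, (aeval z) (F α) = (∏ j, f j ^ α j) * M ^ d := by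
    intro α hα
    rw [hF]
    simp only [map_mul, map_prod, map_pow, hNt, hMt]
    have : ∀ j, f j * M = N j := hfM
    calc (∏ j, N j ^ α j) * M ^ (d - ∑ i, α i)
        = (∏ j, (f j * M) ^ α j) * M ^ (d - ∑ i, α i) := by simp [hfM]
      _ = ((∏ j, f j ^ α j) * M ^ (∑ i, α i)) * M ^ (d - ∑ i, α i) := by
          simp only [mul_pow]
          rw [Finset.prod_mul_distrib, Finset.prod_pow_eq_pow_sum]
      _ = (∏ j, f j ^ α j) * M ^ d := by
          rw [mul_assoc, ← pow_add, Nat.add_sub_cancel' (hsum_le α hα)]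
  have hfinal : (∑ i : box 7 t, q i • (∏ j, f j ^ i.1 j)) * M ^ d = 0 := by
    rw [Finset.sum_mul]
    rw [← hrelD]
    refine Finset.sum_congr rfl fun i _ => ?_
    rw [hFz i.1 i.2, smul_mul_assoc]
  have hS : (∑ i : box 7 t, q i • (∏ j, f j ^ i.1 j)) = 0 := by
    rcases mul_eq_zero.mp hfinal with h | h
    · exact h
    · exact absurd h (pow_ne_zero _ hM0)
  rw [hQ, map_sum]
  rw [← hS]
  refine Finset.sum_congr rfl fun i _ => ?_
  rw [map_smul, aeval_monomial]
  congr 1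
  rw [map_one, one_mul]
  exact Finsupp.prod_fintype _ _ (fun j => pow_zero _)



variable {A : Type*} [CommRing A] [Algebra ℚ A]

/-- `Dep P r`: every `r` elements of `A` are algebraically dependent over `ℚ` modulo `P`. -/
def Dep (P : Ideal A) (r : ℕ) : Prop :=
  ∀ f : Fin r → A, ∃ Q : MvPolynomial (Fin r) ℚ, Q ≠ 0 ∧ aeval f Q ∈ P

lemma dep_drop {P P' : Ideal A} (hP : P.IsPrime) (hP' : P'.IsPrime) (hlt : P < P') {r : ℕ}
    (H : Dep P (r+1)) : Dep P' r := by
  classical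
  intro f
  obtain ⟨a, haP', haP⟩ := SetLike.exists_of_lt hlt
  set g : Fin (r+1) → A := Fin.cases a f with hg
  set E : Polynomial (MvPolynomial (Fin r) ℚ) →+* A :=
    Polynomial.eval₂RingHom
      ((aeval f : MvPolynomial (Fin r) ℚ →ₐ[ℚ] A) : MvPolynomial (Fin r) ℚ →+* A) a with hE
  have key : ∀ Q : MvPolynomial (Fin (r+1)) ℚ, aeval g Q = E (finSuccEquiv ℚ r Q) := by
    intro Q
    have h2 : ((aeval g : MvPolynomial (Fin (r+1)) ℚ →ₐ[ℚ] A) :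
        MvPolynomial (Fin (r+1)) ℚ →+* A) =
        E.comp ((finSuccEquiv ℚ r : MvPolynomial (Fin (r+1)) ℚ ≃ₐ[ℚ]
          Polynomial (MvPolynomial (Fin r) ℚ)) :
            MvPolynomial (Fin (r+1)) ℚ →+* Polynomial (MvPolynomial (Fin r) ℚ)) := by
      apply MvPolynomial.ringHom_ext
      · intro q
        have h1 : (MvPolynomial.finSuccEquiv ℚ r) (MvPolynomial.C q) =
            Polynomial.C (MvPolynomial.C q) := by simp [finSuccEquiv_apply]
        simp only [RingHom.coe_coe, RingHom.coe_comp, Function.comp_apply]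
        rw [h1]
        simp [hE]
      · intro i
        refine Fin.cases ?_ ?_ i
        · simp only [RingHom.coe_coe, RingHom.coe_comp, Function.comp_apply]
          rw [finSuccEquiv_X_zero]
          simp [hE, hg]
        · intro j
          simp only [RingHom.coe_coe, RingHom.coe_comp, Function.comp_apply]
          rw [finSuccEquiv_X_succ]
          simp [hE, hg]
    simpa using RingHom.congr_fun h2 Q
  obtain ⟨Q0, hQ0ne, hQ0⟩ := H g
  have hex : ∃ n, ∃ p : Polynomial (MvPolynomial (Fin r) ℚ), p ≠ 0 ∧ E p ∈ P ∧ p.natDegree = n := by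
    refine ⟨(finSuccEquiv ℚ r Q0).natDegree, finSuccEquiv ℚ r Q0, ?_, ?_, rfl⟩
    · simpa using hQ0ne
    · rw [← key]; exact hQ0
  obtain ⟨p, hpne, hpP, hpdeg⟩ := Nat.find_spec hex
  by_cases hc0 : p.coeff 0 = 0
  · exfalso
    have hsplit : p = p.divX * Polynomial.X := by
      conv_lhs => rw [← Polynomial.divX_mul_X_add p]
      rw [hc0, map_zero, add_zero]
    have hdvX_ne : p.divX ≠ 0 := by
      intro h0
      rw [h0, zero_mul] at hsplit
      exact hpne hsplit
    have hEdivX : E p.divX ∈ P := by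
      have : E p = E p.divX * a := by
        conv_lhs => rw [hsplit]
        rw [map_mul]
        congr 1
        simp [hE]
      rw [this] at hpP
      rcases hP.mem_or_mem hpP with h | h
      · exact h
      · exact absurd h haP
    have hdeglt : p.divX.natDegree < Nat.find hex := by
      rw [← hpdeg]
      have h1 : p.natDegree ≠ 0 := by
        intro h0
        have := Polynomial.eq_C_of_natDegree_eq_zero h0
        rw [this, hc0, map_zero] at hpne
        exact hpne rfl
      have := Polynomial.natDegree_divX_eq_natDegree_tsub_one (p := p)
      omega
    exact Nat.find_min hex hdeglt ⟨p.divX, hdvX_ne, hEdivX, rfl⟩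
  · refine ⟨p.coeff 0, hc0, ?_⟩
    have h1 : (aeval f) (p.coeff 0) = E p - E p.divX * a := by
      have : E p = E p.divX * a + (aeval f) (p.coeff 0) := by
        conv_lhs => rw [← Polynomial.divX_mul_X_add p]
        rw [map_add, map_mul]
        congr 1
        · congr 1
          simp [hE]
        · simp [hE]
      rw [this]; ring
    rw [h1]
    exact Ideal.sub_mem _ (hlt.le hpP) (Ideal.mul_mem_left _ _ haP')

lemma no_long_chain (P : ℕ → Ideal A) (hprime : ∀ i ≤ 7, (P i).IsPrime)
    (hlt : ∀ i < 7, P i < P (i+1)) (H0 : Dep (P 0) 7) : False := by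
  have step : ∀ i, i ≤ 7 → Dep (P i) (7 - i) := by
    intro i
    induction i with
    | zero => intro _; exact H0
    | succ i ih =>
      intro hi
      have e : 7 - i = (7 - (i+1)) + 1 := by omega
      have h := ih (by omega)
      rw [e] at h
      exact dep_drop (hprime i (by omega)) (hprime (i+1) hi) (hlt i (by omega)) h
  have h7 : Dep (P 7) 0 := by simpa using step 7 le_rfl
  obtain ⟨Q, hQne, hQmem⟩ := h7 (Fin.elim0)
  have hQC : Q = MvPolynomial.C (Q.coeff 0) := eq_C_of_isEmpty Q
  have hc : Q.coeff 0 ≠ 0 := by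
    intro h0
    rw [hQC, h0, map_zero] at hQne
    exact hQne rfl
  have : IsUnit ((aeval (Fin.elim0 : Fin 0 → A)) Q) := by
    rw [hQC, aeval_C]
    exact (isUnit_iff_ne_zero.mpr hc).map (algebraMap ℚ A)
  exact (hprime 7 le_rfl).ne_top (Ideal.eq_top_of_isUnit_mem _ hQmem this)



variable {D : Type*} [CommRing D] [IsDomain D] [Algebra ℚ D]

lemma cross_step {Xi Yi Xk Yk Xj Yj : D} (h1 : Xi*Yk = Xk*Yi) (h2 : Xk*Yj = Xj*Yk)
    (hk : Xk ≠ 0 ∨ Yk ≠ 0) : Xi*Yj = Xj*Yi := by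
  rcases hk with hk | hk
  · apply mul_left_cancel₀ hk
    linear_combination Xi * h2 + Xj * h1
  · apply mul_left_cancel₀ hk
    linear_combination Yj * h1 + Yi * h2

lemma cross_of_interval (X Y : ℕ → D)
    (hrel : ∀ i, i < 4 → X i * Y (i+1) = X (i+1) * Y i) (a b : ℕ) (hb : b ≤ 4)
    (hnz : ∀ k, a < k → k < b → (X k ≠ 0 ∨ Y k ≠ 0)) :
    ∀ i j, a ≤ i → i ≤ j → j ≤ b → X i * Y j = X j * Y i := by
  have main : ∀ n i j, a ≤ i → i ≤ j → j ≤ b → j - i = n → X i * Y j = X j * Y i := by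
    intro n
    induction n using Nat.strong_induction_on with
    | _ n ih =>
      intro i j hai hij hjb hn
      match n, hn with
      | 0, hn =>
        have : i = j := by omega
        subst this; rfl
      | 1, hn =>
        have : j = i + 1 := by omega
        subst this
        exact hrel i (by omega)
      | (n+2), hn =>
        have h1 : X i * Y (j-1) = X (j-1) * Y i :=
          ih (n+1) (by omega) i (j-1) hai (by omega) (by omega) (by omega)
        have h2 : X (j-1) * Y j = X j * Y (j-1) := by
          have := hrel (j-1) (by omega)
          rwa [show j - 1 + 1 = j by omega] at this
        exact cross_step h1 h2 (hnz (j-1) (by omega) (by omega))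
  exact fun i j hai hij hjb => main (j - i) i j hai hij hjb rfl

lemma comp_data (X Y : ℕ → D) (a b : ℕ) (hab : a ≤ b)
    (hcross : ∀ i j, a ≤ i → i ≤ j → j ≤ b → X i * Y j = X j * Y i) :
    ∃ (L : List D) (m : D), L.length ≤ b - a + 2 ∧ m ≠ 0 ∧
      m ∈ Algebra.adjoin ℚ {x | x ∈ L} ∧
      (∀ i, a ≤ i → i ≤ b → X i * m ∈ Algebra.adjoin ℚ {x | x ∈ L} ∧
        Y i * m ∈ Algebra.adjoin ℚ {x | x ∈ L}) := by
  by_cases hX : ∀ i, a ≤ i → i ≤ b → X i = 0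
  · refine ⟨(List.range (b-a+1)).map (fun k => Y (a+k)), 1, ?_, one_ne_zero, one_mem _, ?_⟩
    · simp
    · intro i hai hib
      have hYmem : Y i ∈ {x | x ∈ (List.range (b-a+1)).map (fun k => Y (a+k))} := by
        simp only [Set.mem_setOf_eq, List.mem_map, List.mem_range]
        exact ⟨i - a, by omega, by rw [show a + (i-a) = i by omega]⟩
      constructor
      · rw [hX i hai hib, zero_mul]; exact zero_mem _
      · rw [mul_one]; exact Algebra.subset_adjoin hYmem
  · push_neg at hX
    obtain ⟨t0, ht0a, ht0b, ht0⟩ := hX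
    set L : List D := Y t0 :: (List.range (b-a+1)).map (fun k => X (a+k)) with hL
    have hXmem : ∀ i, a ≤ i → i ≤ b → X i ∈ {x | x ∈ L} := by
      intro i hai hib
      simp only [hL, Set.mem_setOf_eq, List.mem_cons, List.mem_map, List.mem_range]
      exact Or.inr ⟨i - a, by omega, by rw [show a + (i-a) = i by omega]⟩
    have hYt0mem : Y t0 ∈ {x | x ∈ L} := by simp [hL]
    have hXt0 : X t0 ∈ Algebra.adjoin ℚ {x | x ∈ L} :=
      Algebra.subset_adjoin (hXmem t0 ht0a ht0b)
    refine ⟨L, X t0, ?_, ht0, hXt0, ?_⟩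
    · simp [hL]
    · intro i hai hib
      constructor
      · exact mul_mem (Algebra.subset_adjoin (hXmem i hai hib)) hXt0
      · have h : Y i * X t0 = X i * Y t0 := by
          rcases le_total i t0 with h | h
          · have := hcross i t0 hai h ht0b
            linear_combination - this
          · have := hcross t0 i ht0a h hib
            linear_combination this
        rw [h]
        exact mul_mem (Algebra.subset_adjoin (hXmem i hai hib))
          (Algebra.subset_adjoin hYt0mem)

/-- The target: six parameters and a nonzero common denominator. -/
def Good (X Y : ℕ → D) : Prop :=
  ∃ (z : Fin 6 → D) (m : D), m ≠ 0 ∧ m ∈ Algebra.adjoin ℚ (Set.range z) ∧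
    ∀ i, i ≤ 4 → X i * m ∈ Algebra.adjoin ℚ (Set.range z) ∧
      Y i * m ∈ Algebra.adjoin ℚ (Set.range z)

lemma pack (X Y : ℕ → D) (L : List D) (m : D) (hL : L.length ≤ 6) (hm : m ≠ 0)
    (hmem : m ∈ Algebra.adjoin ℚ {x | x ∈ L})
    (hall : ∀ i, i ≤ 4 → X i * m ∈ Algebra.adjoin ℚ {x | x ∈ L} ∧
      Y i * m ∈ Algebra.adjoin ℚ {x | x ∈ L}) : Good X Y := by
  have hsub : {x | x ∈ L} ⊆ Set.range (fun j : Fin 6 => L.getD j 0) := by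
    intro x hx
    obtain ⟨n, hn, rfl⟩ := List.getElem_of_mem hx
    refine ⟨⟨n, by omega⟩, ?_⟩
    simp only
    rw [List.getD_eq_getElem?_getD]
    simp [List.getElem?_eq_getElem hn]
  have hadj := Algebra.adjoin_mono (R := ℚ) hsub
  exact ⟨fun j : Fin 6 => L.getD j 0, m, hm, hadj hmem,
    fun i hi => ⟨hadj (hall i hi).1, hadj (hall i hi).2⟩⟩

lemma combine2 (X Y : ℕ → D) (a b a' b' : ℕ) (hab : a ≤ b) (hab' : a' ≤ b')
    (hc1 : ∀ i j, a ≤ i → i ≤ j → j ≤ b → X i * Y j = X j * Y i)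
    (hc2 : ∀ i j, a' ≤ i → i ≤ j → j ≤ b' → X i * Y j = X j * Y i)
    (hlen : (b - a) + (b' - a') ≤ 2)
    (hcover : ∀ i, i ≤ 4 → (a ≤ i ∧ i ≤ b) ∨ (a' ≤ i ∧ i ≤ b') ∨ (X i = 0 ∧ Y i = 0)) :
    Good X Y := by
  obtain ⟨L1, m1, hlen1, hm1, hmem1, hall1⟩ := comp_data X Y a b hab hc1
  obtain ⟨L2, m2, hlen2, hm2, hmem2, hall2⟩ := comp_data X Y a' b' hab' hc2
  have hs1 : Algebra.adjoin ℚ {x | x ∈ L1} ≤ Algebra.adjoin ℚ {x | x ∈ L1 ++ L2} :=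
    Algebra.adjoin_mono (by intro x hx; simp only [Set.mem_setOf_eq, List.mem_append]; tauto)
  have hs2 : Algebra.adjoin ℚ {x | x ∈ L2} ≤ Algebra.adjoin ℚ {x | x ∈ L1 ++ L2} :=
    Algebra.adjoin_mono (by intro x hx; simp only [Set.mem_setOf_eq, List.mem_append]; tauto)
  refine pack X Y (L1 ++ L2) (m1 * m2) (by simp only [List.length_append]; omega)
    (mul_ne_zero hm1 hm2) (mul_mem (hs1 hmem1) (hs2 hmem2)) ?_
  intro i hi
  rcases hcover i hi with ⟨h1, h2⟩ | ⟨h1, h2⟩ | ⟨h1, h2⟩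
  · constructor
    · rw [show X i * (m1 * m2) = (X i * m1) * m2 by ring]
      exact mul_mem (hs1 (hall1 i h1 h2).1) (hs2 hmem2)
    · rw [show Y i * (m1 * m2) = (Y i * m1) * m2 by ring]
      exact mul_mem (hs1 (hall1 i h1 h2).2) (hs2 hmem2)
  · constructor
    · rw [show X i * (m1 * m2) = (X i * m2) * m1 by ring]
      exact mul_mem (hs2 (hall2 i h1 h2).1) (hs1 hmem1)
    · rw [show Y i * (m1 * m2) = (Y i * m2) * m1 by ring]
      exact mul_mem (hs2 (hall2 i h1 h2).2) (hs1 hmem1)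
  · constructor
    · rw [h1, zero_mul]; exact zero_mem _
    · rw [h2, zero_mul]; exact zero_mem _

lemma combine1 (X Y : ℕ → D) (a b : ℕ) (hab : a ≤ b)
    (hc1 : ∀ i j, a ≤ i → i ≤ j → j ≤ b → X i * Y j = X j * Y i)
    (hlen : b - a ≤ 4)
    (hcover : ∀ i, i ≤ 4 → (a ≤ i ∧ i ≤ b) ∨ (X i = 0 ∧ Y i = 0)) :
    Good X Y := by
  obtain ⟨L1, m1, hlen1, hm1, hmem1, hall1⟩ := comp_data X Y a b hab hc1
  refine pack X Y L1 m1 (by omega) hm1 hmem1 ?_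
  intro i hi
  rcases hcover i hi with ⟨h1, h2⟩ | ⟨h1, h2⟩
  · exact hall1 i h1 h2
  · constructor
    · rw [h1, zero_mul]; exact zero_mem _
    · rw [h2, zero_mul]; exact zero_mem _

lemma combine3 (X Y : ℕ → D) (a b a' b' a'' b'' : ℕ)
    (hab : a ≤ b) (hab' : a' ≤ b') (hab'' : a'' ≤ b'')
    (hc1 : ∀ i j, a ≤ i → i ≤ j → j ≤ b → X i * Y j = X j * Y i)
    (hc2 : ∀ i j, a' ≤ i → i ≤ j → j ≤ b' → X i * Y j = X j * Y i)
    (hc3 : ∀ i j, a'' ≤ i → i ≤ j → j ≤ b'' → X i * Y j = X j * Y i)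
    (hlen : (b - a) + (b' - a') + (b'' - a'') ≤ 0)
    (hcover : ∀ i, i ≤ 4 → (a ≤ i ∧ i ≤ b) ∨ (a' ≤ i ∧ i ≤ b') ∨ (a'' ≤ i ∧ i ≤ b'') ∨
      (X i = 0 ∧ Y i = 0)) :
    Good X Y := by
  obtain ⟨L1, m1, hlen1, hm1, hmem1, hall1⟩ := comp_data X Y a b hab hc1
  obtain ⟨L2, m2, hlen2, hm2, hmem2, hall2⟩ := comp_data X Y a' b' hab' hc2
  obtain ⟨L3, m3, hlen3, hm3, hmem3, hall3⟩ := comp_data X Y a'' b'' hab'' hc3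
  set L : List D := L1 ++ L2 ++ L3 with hLdef
  have hs1 : Algebra.adjoin ℚ {x | x ∈ L1} ≤ Algebra.adjoin ℚ {x | x ∈ L} :=
    Algebra.adjoin_mono (by intro x hx; simp only [hLdef, Set.mem_setOf_eq, List.mem_append]; tauto)
  have hs2 : Algebra.adjoin ℚ {x | x ∈ L2} ≤ Algebra.adjoin ℚ {x | x ∈ L} :=
    Algebra.adjoin_mono (by intro x hx; simp only [hLdef, Set.mem_setOf_eq, List.mem_append]; tauto)
  have hs3 : Algebra.adjoin ℚ {x | x ∈ L3} ≤ Algebra.adjoin ℚ {x | x ∈ L} :=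
    Algebra.adjoin_mono (by intro x hx; simp only [hLdef, Set.mem_setOf_eq, List.mem_append]; tauto)
  refine pack X Y L (m1 * m2 * m3) (by simp only [hLdef, List.length_append]; omega)
    (mul_ne_zero (mul_ne_zero hm1 hm2) hm3)
    (mul_mem (mul_mem (hs1 hmem1) (hs2 hmem2)) (hs3 hmem3)) ?_
  intro i hi
  rcases hcover i hi with ⟨h1, h2⟩ | ⟨h1, h2⟩ | ⟨h1, h2⟩ | ⟨h1, h2⟩
  · refine ⟨?_, ?_⟩
    · rw [show X i * (m1 * m2 * m3) = (X i * m1) * m2 * m3 by ring]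
      exact mul_mem (mul_mem (hs1 (hall1 i h1 h2).1) (hs2 hmem2)) (hs3 hmem3)
    · rw [show Y i * (m1 * m2 * m3) = (Y i * m1) * m2 * m3 by ring]
      exact mul_mem (mul_mem (hs1 (hall1 i h1 h2).2) (hs2 hmem2)) (hs3 hmem3)
  · refine ⟨?_, ?_⟩
    · rw [show X i * (m1 * m2 * m3) = (X i * m2) * m1 * m3 by ring]
      exact mul_mem (mul_mem (hs2 (hall2 i h1 h2).1) (hs1 hmem1)) (hs3 hmem3)
    · rw [show Y i * (m1 * m2 * m3) = (Y i * m2) * m1 * m3 by ring]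
      exact mul_mem (mul_mem (hs2 (hall2 i h1 h2).2) (hs1 hmem1)) (hs3 hmem3)
  · refine ⟨?_, ?_⟩
    · rw [show X i * (m1 * m2 * m3) = (X i * m3) * m1 * m2 by ring]
      exact mul_mem (mul_mem (hs3 (hall3 i h1 h2).1) (hs1 hmem1)) (hs2 hmem2)
    · rw [show Y i * (m1 * m2 * m3) = (Y i * m3) * m1 * m2 by ring]
      exact mul_mem (mul_mem (hs3 (hall3 i h1 h2).2) (hs1 hmem1)) (hs2 hmem2)
  · refine ⟨?_, ?_⟩
    · rw [h1, zero_mul]; exact zero_mem _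
    · rw [h2, zero_mul]; exact zero_mem _

lemma exists_good (X Y : ℕ → D)
    (hrel : ∀ i, i < 4 → X i * Y (i+1) = X (i+1) * Y i) : Good X Y := by
  have nz : ∀ k, ¬ (X k = 0 ∧ Y k = 0) → (X k ≠ 0 ∨ Y k ≠ 0) := by
    intro k h
    by_contra hcon
    push_neg at hcon
    exact h ⟨hcon.1, hcon.2⟩
  have cross : ∀ a b : ℕ, b ≤ 4 → (∀ k, a < k → k < b → ¬ (X k = 0 ∧ Y k = 0)) →
      ∀ i j, a ≤ i → i ≤ j → j ≤ b → X i * Y j = X j * Y i := by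
    intro a b hb h
    exact cross_of_interval X Y hrel a b hb (fun k h1 h2 => nz k (h k h1 h2))
  by_cases h1 : X 1 = 0 ∧ Y 1 = 0 <;> by_cases h2 : X 2 = 0 ∧ Y 2 = 0 <;>
    by_cases h3 : X 3 = 0 ∧ Y 3 = 0
  · -- h1 h2 h3 : components [0,0],[4,4]
    exact combine2 X Y 0 0 4 4 le_rfl le_rfl
      (cross 0 0 (by omega) (by omega)) (cross 4 4 (by omega) (by omega))
      (by omega) (fun i hi => by interval_cases i <;> tauto)
  · -- h1 h2 ¬h3 : [0,0],[3,4]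
    exact combine2 X Y 0 0 3 4 le_rfl (by omega)
      (cross 0 0 (by omega) (by omega)) (cross 3 4 (by omega) (by omega))
      (by omega) (fun i hi => by interval_cases i <;> tauto)
  · -- h1 ¬h2 h3 : [0,0],[2,2],[4,4]
    exact combine3 X Y 0 0 2 2 4 4 le_rfl le_rfl le_rfl
      (cross 0 0 (by omega) (by omega)) (cross 2 2 (by omega) (by omega))
      (cross 4 4 (by omega) (by omega))
      (by omega) (fun i hi => by interval_cases i <;> tauto)
  · -- h1 ¬h2 ¬h3 : [0,0],[2,4]
    exact combine2 X Y 0 0 2 4 le_rfl (by omega)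
      (cross 0 0 (by omega) (by omega))
      (cross 2 4 (by omega) (fun k hk1 hk2 => by
        have : k = 3 := by omega
        subst this; exact h3))
      (by omega) (fun i hi => by interval_cases i <;> tauto)
  · -- ¬h1 h2 h3 : [0,1],[4,4]
    exact combine2 X Y 0 1 4 4 (by omega) le_rfl
      (cross 0 1 (by omega) (by omega)) (cross 4 4 (by omega) (by omega))
      (by omega) (fun i hi => by interval_cases i <;> tauto)
  · -- ¬h1 h2 ¬h3 : [0,1],[3,4]
    exact combine2 X Y 0 1 3 4 (by omega) (by omega)
      (cross 0 1 (by omega) (by omega)) (cross 3 4 (by omega) (by omega))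
      (by omega) (fun i hi => by interval_cases i <;> tauto)
  · -- ¬h1 ¬h2 h3 : [0,2],[4,4]
    exact combine2 X Y 0 2 4 4 (by omega) le_rfl
      (cross 0 2 (by omega) (fun k hk1 hk2 => by
        have : k = 1 := by omega
        subst this; exact h1))
      (cross 4 4 (by omega) (by omega))
      (by omega) (fun i hi => by interval_cases i <;> tauto)
  · -- ¬h1 ¬h2 ¬h3 : [0,4]
    exact combine1 X Y 0 4 (by omega)
      (cross 0 4 (by omega) (fun k hk1 hk2 => by
        interval_cases k <;> assumption))
      (by omega) (fun i hi => by interval_cases i <;> tauto)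



abbrev A5 : Type := MvPolynomial (Fin 5 ⊕ Fin 5) ℚ

noncomputable def J5 : Ideal A5 := Ideal.span
  {(X (Sum.inl 0) * X (Sum.inr 1) - X (Sum.inl 1) * X (Sum.inr 0) : A5),
    X (Sum.inl 1) * X (Sum.inr 2) - X (Sum.inl 2) * X (Sum.inr 1),
    X (Sum.inl 2) * X (Sum.inr 3) - X (Sum.inl 3) * X (Sum.inr 2),
    X (Sum.inl 3) * X (Sum.inr 4) - X (Sum.inl 4) * X (Sum.inr 3)}

def wlist : List (Fin 5 ⊕ Fin 5) :=
  [Sum.inl 0, Sum.inl 2, Sum.inl 4, Sum.inr 0, Sum.inr 2, Sum.inr 4]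

def sset (k : ℕ) : List (Fin 5 ⊕ Fin 5) :=
  [Sum.inl 1, Sum.inr 1, Sum.inl 3, Sum.inr 3] ++ wlist.take k

noncomputable def gk (k : ℕ) : (Fin 5 ⊕ Fin 5) → A5 :=
  fun v => if (sset k).contains v then 0 else X v

noncomputable def Pk (k : ℕ) : Ideal A5 :=
  RingHom.ker ((aeval (gk k) : A5 →ₐ[ℚ] A5) : A5 →+* A5)

instance Pk_prime (k : ℕ) : (Pk k).IsPrime := RingHom.ker_isPrime _

lemma mem_ker_iff (k : ℕ) (x : A5) : x ∈ Pk k ↔ (aeval (gk k)) x = 0 := by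
  rw [Pk, RingHom.mem_ker]; rfl

lemma sset_mono {k k' : ℕ} (h : k ≤ k') (hk' : k' ≤ 6) :
    ∀ v, (sset k).contains v → (sset k').contains v := by
  interval_cases k' <;> interval_cases k <;> decide

lemma Pk_mono {k k' : ℕ} (h : k ≤ k') (hk' : k' ≤ 6) : Pk k ≤ Pk k' := by
  have hcomp : (aeval (gk k') : A5 →ₐ[ℚ] A5).comp (aeval (gk k)) = aeval (gk k') := by
    apply MvPolynomial.algHom_ext
    intro v
    simp only [AlgHom.comp_apply, aeval_X]
    by_cases hv : (sset k).contains v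
    · have hv' : (sset k').contains v = true := sset_mono h hk' v hv
      simp [gk, hv, hv']
    · simp [gk, hv]
  intro x hx
  rw [mem_ker_iff] at hx ⊢
  have := congrFun (congrArg (fun (h : A5 →ₐ[ℚ] A5) (y : A5) => h y) hcomp) x
  simp only [AlgHom.comp_apply] at this
  rw [← this, hx, map_zero]

lemma Pk_lt (k : ℕ) (hk : k < 6) : Pk k < Pk (k + 1) := by
  refine lt_of_le_of_ne (Pk_mono (by omega) (by omega)) ?_
  intro heq
  have hmem : (sset (k+1)).contains (wlist[k]?.getD (Sum.inl 0)) = true := by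
    interval_cases k <;> decide
  have hnmem : ¬ ((sset k).contains (wlist[k]?.getD (Sum.inl 0)) = true) := by
    interval_cases k <;> decide
  have h1 : X (wlist[k]?.getD (Sum.inl 0)) ∈ Pk (k+1) := by
    rw [mem_ker_iff, aeval_X]
    simp [gk, hmem]
  have h2 : X (wlist[k]?.getD (Sum.inl 0)) ∈ Pk k := heq ▸ h1
  rw [mem_ker_iff, aeval_X] at h2
  simp only [gk, hnmem, if_false] at h2
  exact MvPolynomial.X_ne_zero _ h2

lemma J5_le_Pk0 : J5 ≤ Pk 0 := by
  rw [J5, Ideal.span_le]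
  intro g hg
  simp only [Set.mem_insert_iff, Set.mem_singleton_iff] at hg
  have e1 : (sset 0).contains (Sum.inl 1 : Fin 5 ⊕ Fin 5) := by decide
  have e2 : (sset 0).contains (Sum.inr 1 : Fin 5 ⊕ Fin 5) := by decide
  have e3 : (sset 0).contains (Sum.inl 3 : Fin 5 ⊕ Fin 5) := by decide
  have e4 : (sset 0).contains (Sum.inr 3 : Fin 5 ⊕ Fin 5) := by decide
  rcases hg with rfl | rfl | rfl | rfl <;>
  · show _ ∈ Pk 0
    rw [mem_ker_iff, map_sub, map_mul, map_mul, aeval_X, aeval_X, aeval_X, aeval_X]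
    simp [gk, e1, e2, e3, e4]

lemma J5_le_Pk (k : ℕ) (hk : k ≤ 6) : J5 ≤ Pk k :=
  le_trans J5_le_Pk0 (Pk_mono (Nat.zero_le k) hk)

noncomputable def Qk (k : ℕ) : Ideal (A5 ⧸ J5) := Ideal.map (Ideal.Quotient.mk J5) (Pk k)

lemma Qk_prime (k : ℕ) (hk : k ≤ 6) : (Qk k).IsPrime := by
  refine Ideal.map_isPrime_of_surjective Ideal.Quotient.mk_surjective ?_
  rw [Ideal.mk_ker]
  exact J5_le_Pk k hk

lemma Qk_lt (k : ℕ) (hk : k < 6) : Qk k < Qk (k + 1) := by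
  have hcomap : ∀ j, j ≤ 6 → Ideal.comap (Ideal.Quotient.mk J5) (Qk j) = Pk j := by
    intro j hj
    rw [Qk, Ideal.comap_map_of_surjective _ Ideal.Quotient.mk_surjective]
    rw [← RingHom.ker_eq_comap_bot, Ideal.mk_ker]
    exact sup_eq_left.mpr (J5_le_Pk j hj)
  refine lt_of_le_of_ne (Ideal.map_mono (Pk_lt k hk).le) ?_
  intro heq
  have := congrArg (Ideal.comap (Ideal.Quotient.mk J5)) heq
  rw [hcomap k (by omega), hcomap (k+1) (by omega)] at this
  exact (Pk_lt k hk).ne this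

noncomputable def chain : LTSeries (PrimeSpectrum (A5 ⧸ J5)) where
  length := 6
  toFun := fun i => ⟨Qk i.val, Qk_prime i.val (Nat.lt_succ_iff.mp i.isLt)⟩
  step := by
    intro i
    have h : Qk i.castSucc.val < Qk (i.castSucc.val + 1) :=
      Qk_lt i.castSucc.val (by have := i.isLt; simp only [Fin.coe_castSucc]; omega)
    have heq : (i.succ : Fin 7).val = i.castSucc.val + 1 := by
      simp [Fin.val_succ, Fin.coe_castSucc]
    show (⟨Qk i.castSucc.val, _⟩ : PrimeSpectrum _) < ⟨Qk i.succ.val, _⟩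
    rw [← PrimeSpectrum.asIdeal_lt_asIdeal]
    simpa [heq] using h

lemma lower_bound : (6 : WithBot (WithTop ℕ)) ≤ ringKrullDim (A5 ⧸ J5) := by
  have := Order.LTSeries.length_le_krullDim chain
  have hlen : chain.length = 6 := rfl
  rw [hlen] at this
  exact_mod_cast this

open Fin.NatCast in
lemma dep_of_prime (P : Ideal A5) (hP : P.IsPrime) (hJP : J5 ≤ P) : Dep P 7 := by
  classical
  intro f
  let D := A5 ⧸ P
  let mk : A5 →+* D := Ideal.Quotient.mk P
  set Xq : ℕ → D := fun n => mk (X (Sum.inl (n : Fin 5))) with hXq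
  set Yq : ℕ → D := fun n => mk (X (Sum.inr (n : Fin 5))) with hYq
  have gen_mem : ∀ g ∈ ({(X (Sum.inl 0) * X (Sum.inr 1) - X (Sum.inl 1) * X (Sum.inr 0) : A5),
      X (Sum.inl 1) * X (Sum.inr 2) - X (Sum.inl 2) * X (Sum.inr 1),
      X (Sum.inl 2) * X (Sum.inr 3) - X (Sum.inl 3) * X (Sum.inr 2),
      X (Sum.inl 3) * X (Sum.inr 4) - X (Sum.inl 4) * X (Sum.inr 3)} : Set A5), g ∈ P :=
    fun g hg => hJP (Ideal.subset_span hg)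
  have hrel : ∀ i, i < 4 → Xq i * Yq (i+1) = Xq (i+1) * Yq i := by
    intro i hi
    have key : ∀ a b : Fin 5, (X (Sum.inl a) * X (Sum.inr b) -
        X (Sum.inl b) * X (Sum.inr a) : A5) ∈ P →
        mk (X (Sum.inl a)) * mk (X (Sum.inr b)) = mk (X (Sum.inl b)) * mk (X (Sum.inr a)) := by
      intro a b hab
      have := Ideal.Quotient.eq_zero_iff_mem.mpr hab
      rw [map_sub, map_mul, map_mul, sub_eq_zero] at this
      exact this
    interval_cases i <;>
      simp only [hXq, hYq, Nat.cast_ofNat, Nat.cast_one, Nat.cast_zero] <;>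
      norm_num <;>
      apply key <;>
      apply gen_mem <;> simp
  obtain ⟨z, m, hm0, hmR, hall⟩ := exists_good Xq Yq hrel
  -- every element of D multiplied by a power of m lands in the subalgebra
  have main : ∀ p : A5, ∃ e : ℕ, (mk p) * m ^ e ∈ Algebra.adjoin ℚ (Set.range z) := by
    intro p
    induction p using MvPolynomial.induction_on with
    | C a =>
      refine ⟨0, ?_⟩
      rw [pow_zero, mul_one]
      have : mk (MvPolynomial.C a) = algebraMap ℚ D a := rfl
      rw [this]
      exact Subalgebra.algebraMap_mem _ a
    | add p q hp hq =>
      obtain ⟨e1, h1⟩ := hp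
      obtain ⟨e2, h2⟩ := hq
      refine ⟨e1 + e2, ?_⟩
      have : mk (p + q) * m ^ (e1 + e2) =
          (mk p * m ^ e1) * m ^ e2 + (mk q * m ^ e2) * m ^ e1 := by
        rw [map_add, pow_add]; ring
      rw [this]
      exact add_mem (mul_mem h1 (pow_mem hmR e2)) (mul_mem h2 (pow_mem hmR e1))
    | mul_X p v hp =>
      obtain ⟨e, he⟩ := hp
      refine ⟨e + 1, ?_⟩
      have : mk (p * X v) * m ^ (e + 1) = (mk p * m ^ e) * (mk (X v) * m) := by
        rw [map_mul, pow_succ]; ring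
      rw [this]
      refine mul_mem he ?_
      rcases v with j | j
      · have : mk (X (Sum.inl j)) = Xq (j : ℕ) := by
          rw [hXq]; simp [Fin.cast_val_eq_self]
        rw [this]
        exact (hall (j : ℕ) (by omega)).1
      · have : mk (X (Sum.inr j)) = Yq (j : ℕ) := by
          rw [hYq]; simp [Fin.cast_val_eq_self]
        rw [this]
        exact (hall (j : ℕ) (by omega)).2
  choose e he using fun j => main (f j)
  set E : ℕ := Finset.univ.sup e with hE
  have hEj : ∀ j, e j ≤ E := fun j => Finset.le_sup (Finset.mem_univ j)
  set M : D := m ^ E with hM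
  have hM0 : M ≠ 0 := pow_ne_zero _ hm0
  have hMmem : M ∈ Algebra.adjoin ℚ (Set.range z) := pow_mem hmR E
  set N : Fin 7 → D := fun j => mk (f j) * M with hN
  have hNmem : ∀ j, N j ∈ Algebra.adjoin ℚ (Set.range z) := by
    intro j
    have : N j = (mk (f j) * m ^ (e j)) * m ^ (E - e j) := by
      show mk (f j) * m ^ E = _
      rw [mul_assoc, ← pow_add, Nat.add_sub_cancel' (hEj j)]
    rw [this]
    exact mul_mem (he j) (pow_mem hmR _)
  obtain ⟨Q, hQne, hQ0⟩ := key_dep z M hM0 (fun j => mk (f j)) N hNmem hMmem (fun j => rfl)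
  refine ⟨Q, hQne, ?_⟩
  rw [← Ideal.Quotient.eq_zero_iff_mem]
  have hcomp : (Ideal.Quotient.mkₐ ℚ P).comp (aeval f) = aeval (fun j => mk (f j)) := by
    apply MvPolynomial.algHom_ext
    intro i
    simp [mk]
  have := congrFun (congrArg (fun (h : MvPolynomial (Fin 7) ℚ →ₐ[ℚ] D) x => h x) hcomp) Q
  simp only [AlgHom.comp_apply] at this
  have hmkeq : (Ideal.Quotient.mkₐ ℚ P) ((aeval f) Q) = mk ((aeval f) Q) := rfl
  rw [hmkeq] at this
  rw [show (Ideal.Quotient.mk P) ((aeval f) Q) = mk ((aeval f) Q) from rfl, this, hQ0]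

lemma upper_bound (p : LTSeries (PrimeSpectrum (A5 ⧸ J5))) : p.length ≤ 6 := by
  by_contra hcon
  push_neg at hcon
  have h7 : 7 ≤ p.length := hcon
  let mk : A5 →+* A5 ⧸ J5 := Ideal.Quotient.mk J5
  have hsurj : Function.Surjective mk := Ideal.Quotient.mk_surjective
  set P : ℕ → Ideal A5 := fun i =>
    Ideal.comap mk (p.toFun ⟨min i p.length, by omega⟩).asIdeal with hPdef
  have hprime : ∀ i ≤ 7, (P i).IsPrime := by
    intro i _
    exact Ideal.IsPrime.comap mk (hK := (p.toFun _).isPrime)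
  have hlt : ∀ i < 7, P i < P (i+1) := by
    intro i hi
    have hmin1 : min i p.length = i := by omega
    have hmin2 : min (i+1) p.length = i + 1 := by omega
    have hstep : p.toFun ⟨min i p.length, by omega⟩ < p.toFun ⟨min (i+1) p.length, by omega⟩ := by
      apply p.strictMono
      simp only [Fin.mk_lt_mk]
      omega
    have hle : (p.toFun ⟨min i p.length, by omega⟩).asIdeal <
        (p.toFun ⟨min (i+1) p.length, by omega⟩).asIdeal := hstep
    constructor
    · exact Ideal.comap_mono hle.le
    · intro hcontra
      have hmapeq : ∀ q : Ideal (A5 ⧸ J5), Ideal.map mk (Ideal.comap mk q) = q :=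
        fun q => Ideal.map_comap_of_surjective mk hsurj q
      have := congrArg (Ideal.map mk) (le_antisymm (Ideal.comap_mono hle.le) hcontra)
      rw [hmapeq, hmapeq] at this
      exact hle.ne this
  refine no_long_chain P hprime hlt ?_
  apply dep_of_prime _ (hprime 0 (by omega))
  calc J5 = RingHom.ker mk := Ideal.mk_ker.symm
    _ ≤ P 0 := by
      rw [hPdef]
      exact fun x hx => by
        simp only [Ideal.mem_comap]
        rw [RingHom.mem_ker] at hx
        rw [hx]
        exact (Submodule.zero_mem _)


lemma krull_upper : ringKrullDim (A5 ⧸ J5) ≤ 6 := by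
  show @Order.krullDim (PrimeSpectrum (A5 ⧸ J5)) _ ≤ 6
  unfold Order.krullDim
  refine iSup_le fun p => ?_
  have := upper_bound p
  exact_mod_cast this

end BEI

/-- Let `A = ℚ[x₁, …, x₅, y₁, …, y₅]` (with `xᵢ = X (Sum.inl (i-1))` and
`yᵢ = X (Sum.inr (i-1))`) and let
`J = (x₁y₂ − x₂y₁, x₂y₃ − x₃y₂, x₃y₄ − x₄y₃, x₄y₅ − x₅y₄)` be the binomial edge ideal
of the path graph on `5` vertices. Then the Krull dimension of `A/J` equals `6`. -/
theorem binomial_edge_ideal_path_krullDim :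
    ringKrullDim (MvPolynomial (Fin 5 ⊕ Fin 5) ℚ ⧸
      Ideal.span {(X (Sum.inl 0) * X (Sum.inr 1) - X (Sum.inl 1) * X (Sum.inr 0) :
          MvPolynomial (Fin 5 ⊕ Fin 5) ℚ),
        X (Sum.inl 1) * X (Sum.inr 2) - X (Sum.inl 2) * X (Sum.inr 1),
        X (Sum.inl 2) * X (Sum.inr 3) - X (Sum.inl 3) * X (Sum.inr 2),
        X (Sum.inl 3) * X (Sum.inr 4) - X (Sum.inl 4) * X (Sum.inr 3)}) = 6 := by
  show ringKrullDim (BEI.A5 ⧸ BEI.J5) = 6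
  exact le_antisymm BEI.krull_upper BEI.lower_bound
end
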